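/- arXiv:2504.10380 — 7 statements merged into one kernel-verified Lean document; each statement's English description precedes it below -/
import Mathlib

section
/- Existence of forward completion. Every Lorentzian pre-length space (X, ℓ) admits a forward completion (X̄, ℓ̄). -/
open Filter Topology Set

set_option linter.unusedVariables false

universe u v w

noncomputable section

/-- The time separation function `τ = max(0, ℓ)`. -/
def lorTau {X : Type u} (ℓ : X → X → EReal) (x y : X) : EReal := max 0 (ℓ x y)

/-- The chronological relation `x ≪ y`. -/
def chron {X : Type u} (ℓ : X → X → EReal) (x y : X) : Prop := 0 < ℓ x y

/-- The causal relation `x ≤ y`. -/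
def causal {X : Type u} (ℓ : X → X → EReal) (x y : X) : Prop := 0 ≤ ℓ x y

/-- The causal diamond `J(p,q)`. -/
def diamondJ {X : Type u} (ℓ : X → X → EReal) (p q : X) : Set X :=
  {z | causal ℓ p z ∧ causal ℓ z q}

/-- The chronological diamond `I(p,q)`. -/
def diamondI {X : Type u} (ℓ : X → X → EReal) (p q : X) : Set X :=
  {z | chron ℓ p z ∧ chron ℓ z q}

/-- A Lorentzian pre-length space structure on a topological space `(X, tX)`:
`ℓ` takes values in `{−∞} ∪ [0,∞]`, satisfies the reverse triangle inequality (with the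
convention `−∞ + ∞ = ∞ + (−∞) = −∞`, which is definitional for `EReal`), `ℓ(x,x) ≥ 0`,
and the topology is finer than the chronological one. -/
structure IsLPLS {X : Type u} (tX : TopologicalSpace X) (ℓ : X → X → EReal) : Prop where
  bot_or_nonneg : ∀ x y, ℓ x y = ⊥ ∨ 0 ≤ ℓ x y
  revTriangle : ∀ x y z, ℓ x y + ℓ y z ≤ ℓ x z
  refl_nonneg : ∀ x, 0 ≤ ℓ x x
  open_Iplus : ∀ x, @IsOpen X tX {y | chron ℓ x y}
  open_Iminus : ∀ x, @IsOpen X tX {y | chron ℓ y x}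

/-- Forward completeness: every monotone increasing and bounded sequence converges. -/
def ForwardComplete {X : Type u} (tX : TopologicalSpace X) (ℓ : X → X → EReal) : Prop :=
  ∀ (x : ℕ → X) (xhat : X), (∀ k, causal ℓ (x k) (x (k + 1))) → (∀ k, causal ℓ (x k) xhat) →
    ∃ y, Tendsto x atTop (@nhds X tX y)

/-- `(Y, tY, ρ)` together with the map `ι : X → Y` is a forward completion of
`(X, tX, ℓ)`: it is a forward complete Lorentzian pre-length space, all causal futures
and pasts are closed, `ι` is `ℓ`-preserving and `X` is forward dense in `Y`. -/
structure IsForwardCompletion {X : Type u} (tX : TopologicalSpace X) (ℓ : X → X → EReal)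
    {Y : Type v} (tY : TopologicalSpace Y) (ρ : Y → Y → EReal) (ι : X → Y) : Prop where
  lpls : IsLPLS tY ρ
  fwdComplete : ForwardComplete tY ρ
  closed_Jplus : ∀ y : Y, @IsClosed Y tY {z | causal ρ y z}
  closed_Jminus : ∀ y : Y, @IsClosed Y tY {z | causal ρ z y}
  isometric : ∀ x x' : X, ρ (ι x) (ι x') = ℓ x x'
  fwdDense : ∀ y : Y, ∃ u : ℕ → X,
    (∀ k, causal ρ (ι (u k)) (ι (u (k + 1)))) ∧ (∀ k, causal ρ (ι (u k)) y) ∧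
    Tendsto (fun k => ι (u k)) atTop (@nhds Y tY y)


namespace FCaux

/-! ### EReal helpers -/

lemma add_sup_le {ι : Sort*} (c : EReal) (f : ι → EReal) :
    c + (⨆ i, f i) ≤ ⨆ i, c + f i := by
  apply EReal.add_le_of_forall_lt
  intro a' ha' b' hb'
  obtain ⟨i, hi⟩ := lt_iSup_iff.mp hb'
  exact le_trans (add_le_add ha'.le hi.le) (le_iSup (fun i => c + f i) i)

lemma sup_add_le {ι : Sort*} (c : EReal) (f : ι → EReal) :
    (⨆ i, f i) + c ≤ ⨆ i, f i + c := by
  rw [add_comm]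
  refine le_trans (add_sup_le c f) (iSup_mono fun i => ?_)
  rw [add_comm]

lemma pos_add_of_nonneg_of_pos {a b : EReal} (ha : 0 ≤ a) (hb : 0 < b) : 0 < a + b :=
  calc (0:EReal) < b := hb
    _ = 0 + b := (zero_add b).symm
    _ ≤ a + b := add_le_add_left ha b

lemma pos_add_of_pos_of_nonneg {a b : EReal} (ha : 0 < a) (hb : 0 ≤ b) : 0 < a + b := by
  rw [add_comm]; exact pos_add_of_nonneg_of_pos hb ha

lemma nonneg_parts {a b : EReal} (hra : a = ⊥ ∨ 0 ≤ a) (hrb : b = ⊥ ∨ 0 ≤ b)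
    (h : 0 ≤ a + b) : 0 ≤ a ∧ 0 ≤ b := by
  rcases hra with h1 | h1
  · rw [h1, EReal.bot_add] at h; exact absurd h EReal.bot_lt_zero.not_ge
  rcases hrb with h2 | h2
  · rw [h2, EReal.add_bot] at h; exact absurd h EReal.bot_lt_zero.not_ge
  exact ⟨h1, h2⟩

lemma sup_nonneg_elim {ι : Sort*} {f : ι → EReal} (hr : ∀ i, f i = ⊥ ∨ 0 ≤ f i)
    (h : 0 ≤ ⨆ i, f i) : ∃ i, 0 ≤ f i := by
  by_contra hc
  push_neg at hc
  have hall : ∀ i, f i = ⊥ := fun i => (hr i).resolve_right (hc i).not_ge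
  rw [iSup_eq_bot.mpr hall] at h
  exact EReal.bot_lt_zero.not_ge h

/-! ### The construction -/

variable {X : Type u}

/-- Monotone (future-directed) sequences in `X`. -/
def Mono (ℓ : X → X → EReal) (u : ℕ → X) : Prop := ∀ k, 0 ≤ ℓ (u k) (u (k + 1))

/-- The carrier of the completion: all monotone sequences. -/
def M (ℓ : X → X → EReal) : Type u := {u : ℕ → X // Mono ℓ u}

def G (ℓ : X → X → EReal) (u : ℕ → X) (z : X) : EReal := ⨅ k, ℓ (u k) z

def F (ℓ : X → X → EReal) (z : X) (v : ℕ → X) : EReal := ⨆ m, ℓ z (v m)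

def B (ℓ : X → X → EReal) (u v : ℕ → X) : EReal := ⨆ z, (G ℓ u z + F ℓ z v)

open Classical in
def A (ℓ : X → X → EReal) (u v : ℕ → X) : EReal :=
  if (∀ k, ∃ m, 0 ≤ ℓ (u k) (v m)) then 0 else ⊥

def rho (ℓ : X → X → EReal) (u v : M ℓ) : EReal := max (A ℓ u.1 v.1) (B ℓ u.1 v.1)

def emb (ℓ : X → X → EReal) (hr : ∀ x, 0 ≤ ℓ x x) (x : X) : M ℓ :=
  ⟨fun _ => x, fun _ => hr x⟩

def SB (ℓ : X → X → EReal) : Set (Set (M ℓ)) :=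
  {s | ∃ a : M ℓ, s = {y | 0 < rho ℓ a y} ∨ s = {y | 0 < rho ℓ y a} ∨
    s = {y | 0 ≤ rho ℓ a y}ᶜ ∨ s = {y | 0 ≤ rho ℓ y a}ᶜ}

def topo (ℓ : X → X → EReal) : TopologicalSpace (M ℓ) := .generateFrom (SB ℓ)

lemma le_B {ℓ : X → X → EReal} (u v : ℕ → X) (z : X) :
    G ℓ u z + F ℓ z v ≤ B ℓ u v := le_iSup (fun z => G ℓ u z + F ℓ z v) z

lemma le_F {ℓ : X → X → EReal} (z : X) (v : ℕ → X) (m : ℕ) :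
    ℓ z (v m) ≤ F ℓ z v := le_iSup (fun m => ℓ z (v m)) m

lemma G_le {ℓ : X → X → EReal} (u : ℕ → X) (z : X) (k : ℕ) :
    G ℓ u z ≤ ℓ (u k) z := iInf_le (fun k => ℓ (u k) z) k

section lemmas

variable {ℓ : X → X → EReal}

lemma causal_trans (htri : ∀ x y z, ℓ x y + ℓ y z ≤ ℓ x z)
    {x y z : X} (h1 : 0 ≤ ℓ x y) (h2 : 0 ≤ ℓ y z) : 0 ≤ ℓ x z :=
  le_trans (add_nonneg h1 h2) (htri x y z)

lemma mono_le (htri : ∀ x y z, ℓ x y + ℓ y z ≤ ℓ x z) (hrefl : ∀ x, 0 ≤ ℓ x x)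
    {u : ℕ → X} (hu : Mono ℓ u) : ∀ {k m : ℕ}, k ≤ m → 0 ≤ ℓ (u k) (u m) := by
  intro k m hkm
  induction m, hkm using Nat.le_induction with
  | base => exact hrefl (u k)
  | succ n hn ih => exact causal_trans htri ih (hu n)

lemma G_range (hbot : ∀ x y, ℓ x y = ⊥ ∨ 0 ≤ ℓ x y) (u : ℕ → X) (z : X) :
    G ℓ u z = ⊥ ∨ 0 ≤ G ℓ u z := by
  by_cases hc : ∀ k, 0 ≤ ℓ (u k) z
  · exact Or.inr (le_iInf hc)
  · push_neg at hc
    obtain ⟨k, hk⟩ := hc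
    left
    have hb : ℓ (u k) z = ⊥ := (hbot (u k) z).resolve_right hk.not_ge
    exact le_bot_iff.mp (le_trans (G_le u z k) hb.le)

lemma F_range (hbot : ∀ x y, ℓ x y = ⊥ ∨ 0 ≤ ℓ x y) (z : X) (v : ℕ → X) :
    F ℓ z v = ⊥ ∨ 0 ≤ F ℓ z v := by
  by_cases hc : ∃ m, 0 ≤ ℓ z (v m)
  · obtain ⟨m, hm⟩ := hc
    exact Or.inr (le_trans hm (le_F z v m))
  · push_neg at hc
    exact Or.inl (iSup_eq_bot.mpr fun m => (hbot z (v m)).resolve_right (hc m).not_ge)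

lemma GF_range (hbot : ∀ x y, ℓ x y = ⊥ ∨ 0 ≤ ℓ x y) (u : ℕ → X) (z : X) (v : ℕ → X) :
    G ℓ u z + F ℓ z v = ⊥ ∨ 0 ≤ G ℓ u z + F ℓ z v := by
  rcases G_range hbot u z with h1 | h1
  · rw [h1, EReal.bot_add]; exact Or.inl rfl
  rcases F_range hbot z v with h2 | h2
  · rw [h2, EReal.add_bot]; exact Or.inl rfl
  · exact Or.inr (add_nonneg h1 h2)

lemma B_range (hbot : ∀ x y, ℓ x y = ⊥ ∨ 0 ≤ ℓ x y) (u v : ℕ → X) :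
    B ℓ u v = ⊥ ∨ 0 ≤ B ℓ u v := by
  by_cases hc : ∃ z, 0 ≤ G ℓ u z + F ℓ z v
  · obtain ⟨z, hz⟩ := hc
    exact Or.inr (le_trans hz (le_B u v z))
  · push_neg at hc
    exact Or.inl (iSup_eq_bot.mpr fun z => (GF_range hbot u z v).resolve_right (hc z).not_ge)

lemma rho_range (hbot : ∀ x y, ℓ x y = ⊥ ∨ 0 ≤ ℓ x y) (u v : M ℓ) :
    rho ℓ u v = ⊥ ∨ 0 ≤ rho ℓ u v := by
  rcases B_range hbot u.1 v.1 with h2 | h2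
  · by_cases hc : ∀ k, ∃ m, 0 ≤ ℓ (u.1 k) (v.1 m)
    · right; exact le_max_of_le_left (by rw [A, if_pos hc])
    · left; rw [rho, A, if_neg hc, h2]; simp
  · exact Or.inr (le_max_of_le_right h2)

/-- Characterization of the causal relation in the completion. -/
lemma causal_rho_iff (hbot : ∀ x y, ℓ x y = ⊥ ∨ 0 ≤ ℓ x y)
    (htri : ∀ x y z, ℓ x y + ℓ y z ≤ ℓ x z) (u v : M ℓ) :
    0 ≤ rho ℓ u v ↔ ∀ k, ∃ m, 0 ≤ ℓ (u.1 k) (v.1 m) := by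
  constructor
  · intro h
    rcases le_max_iff.mp h with h | h
    · by_contra hc
      rw [A, if_neg hc] at h
      exact EReal.bot_lt_zero.not_ge h
    · obtain ⟨z, hz⟩ := sup_nonneg_elim (fun z => GF_range hbot u.1 z v.1) h
      obtain ⟨hG, hF⟩ := nonneg_parts (G_range hbot u.1 z) (F_range hbot z v.1) hz
      obtain ⟨m, hm⟩ := sup_nonneg_elim (fun m => hbot z (v.1 m)) hF
      intro k
      exact ⟨m, causal_trans htri (le_trans hG (G_le u.1 z k)) hm⟩
  · intro hc
    exact le_max_of_le_left (by rw [A, if_pos hc])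

/-- Characterization of the chronological relation in the completion. -/
lemma chron_rho_iff (u v : M ℓ) :
    0 < rho ℓ u v ↔ ∃ z, 0 < G ℓ u.1 z + F ℓ z v.1 := by
  constructor
  · intro h
    rcases max_choice (A ℓ u.1 v.1) (B ℓ u.1 v.1) with hm | hm <;> rw [rho, hm] at h
    · exfalso
      rw [A] at h
      split_ifs at h
      · exact lt_irrefl _ h
      · exact EReal.bot_lt_zero.not_gt h
    · exact lt_iSup_iff.mp h
  · rintro ⟨z, hz⟩
    exact lt_of_lt_of_le hz (le_trans (le_B u.1 v.1 z) (le_max_right _ _))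

end lemmas

section lemmas2

variable {X : Type u} {ℓ : X → X → EReal}

/-- Reverse triangle inequality for `rho`: the `A + A` case. -/
lemma AA_le (htri : ∀ x y z, ℓ x y + ℓ y z ≤ ℓ x z) (u v w : ℕ → X) :
    A ℓ u v + A ℓ v w ≤ A ℓ u w := by
  by_cases h1 : ∀ k, ∃ m, 0 ≤ ℓ (u k) (v m)
  · by_cases h2 : ∀ k, ∃ m, 0 ≤ ℓ (v k) (w m)
    · have h3 : ∀ k, ∃ m, 0 ≤ ℓ (u k) (w m) := by
        intro k
        obtain ⟨m, hm⟩ := h1 k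
        obtain ⟨j, hj⟩ := h2 m
        exact ⟨j, causal_trans htri hm hj⟩
      rw [A, A, A, if_pos h1, if_pos h2, if_pos h3, zero_add]
    · simp only [A]
      rw [if_pos h1, if_neg h2, EReal.add_bot]; exact bot_le
  · rw [A, if_neg h1, EReal.bot_add]; exact bot_le

/-- Monotonicity of `G` under `A`-causality. -/
lemma G_mono (htri : ∀ x y z, ℓ x y + ℓ y z ≤ ℓ x z)
    (u v : ℕ → X) (hc : ∀ k, ∃ m, 0 ≤ ℓ (u k) (v m)) (z : X) :
    G ℓ v z ≤ G ℓ u z := by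
  refine le_iInf fun k => ?_
  obtain ⟨m, hm⟩ := hc k
  calc G ℓ v z ≤ ℓ (v m) z := G_le v z m
    _ = 0 + ℓ (v m) z := (zero_add _).symm
    _ ≤ ℓ (u k) (v m) + ℓ (v m) z := add_le_add_left hm _
    _ ≤ ℓ (u k) z := htri _ _ _

/-- Monotonicity of `F` under `A`-causality. -/
lemma F_mono (htri : ∀ x y z, ℓ x y + ℓ y z ≤ ℓ x z)
    (v w : ℕ → X) (hc : ∀ k, ∃ m, 0 ≤ ℓ (v k) (w m)) (z : X) :
    F ℓ z v ≤ F ℓ z w := by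
  refine iSup_le fun m => ?_
  obtain ⟨j, hj⟩ := hc m
  calc ℓ z (v m) = ℓ z (v m) + 0 := (add_zero _).symm
    _ ≤ ℓ z (v m) + ℓ (v m) (w j) := add_le_add_right hj _
    _ ≤ ℓ z (w j) := htri _ _ _
    _ ≤ F ℓ z w := le_F z w j

lemma AB_le (htri : ∀ x y z, ℓ x y + ℓ y z ≤ ℓ x z) (u v w : ℕ → X) :
    A ℓ u v + B ℓ v w ≤ B ℓ u w := by
  by_cases h1 : ∀ k, ∃ m, 0 ≤ ℓ (u k) (v m)
  · rw [A, if_pos h1, zero_add]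
    exact iSup_mono fun z => add_le_add_left (G_mono htri u v h1 z) _
  · rw [A, if_neg h1, EReal.bot_add]; exact bot_le

lemma BA_le (htri : ∀ x y z, ℓ x y + ℓ y z ≤ ℓ x z) (u v w : ℕ → X) :
    B ℓ u v + A ℓ v w ≤ B ℓ u w := by
  by_cases h2 : ∀ k, ∃ m, 0 ≤ ℓ (v k) (w m)
  · rw [A, if_pos h2, add_zero]
    exact iSup_mono fun z => add_le_add_right (F_mono htri v w h2 z) _
  · rw [A, if_neg h2, EReal.add_bot]; exact bot_le

lemma FG_le (htri : ∀ x y z, ℓ x y + ℓ y z ≤ ℓ x z) (v : ℕ → X) (z z' : X) :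
    F ℓ z v + G ℓ v z' ≤ ℓ z z' := by
  refine le_trans (sup_add_le _ _) (iSup_le fun m => ?_)
  calc ℓ z (v m) + G ℓ v z' ≤ ℓ z (v m) + ℓ (v m) z' := add_le_add_right (G_le v z' m) _
    _ ≤ ℓ z z' := htri _ _ _

lemma lF_le (htri : ∀ x y z, ℓ x y + ℓ y z ≤ ℓ x z) (w : ℕ → X) (z z' : X) :
    ℓ z z' + F ℓ z' w ≤ F ℓ z w := by
  refine le_trans (add_sup_le _ _) (iSup_le fun n => ?_)
  exact le_trans (htri z z' (w n)) (le_F z w n)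

lemma BB_le (htri : ∀ x y z, ℓ x y + ℓ y z ≤ ℓ x z) (u v w : ℕ → X) :
    B ℓ u v + B ℓ v w ≤ B ℓ u w := by
  refine le_trans (sup_add_le _ _) (iSup_le fun z => ?_)
  refine le_trans (add_sup_le _ _) (iSup_le fun z' => ?_)
  have key : (G ℓ u z + F ℓ z v) + (G ℓ v z' + F ℓ z' w)
      = G ℓ u z + ((F ℓ z v + G ℓ v z') + F ℓ z' w) := by
    rw [add_assoc, ← add_assoc (F ℓ z v)]
  rw [key]
  calc G ℓ u z + ((F ℓ z v + G ℓ v z') + F ℓ z' w)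
      ≤ G ℓ u z + (ℓ z z' + F ℓ z' w) :=
        add_le_add_right (add_le_add_left (FG_le htri v z z') _) _
    _ ≤ G ℓ u z + F ℓ z w := add_le_add_right (lF_le htri w z z') _
    _ ≤ B ℓ u w := le_B u w z

/-- The reverse triangle inequality for `rho`. -/
lemma rho_triangle (htri : ∀ x y z, ℓ x y + ℓ y z ≤ ℓ x z) (u v w : M ℓ) :
    rho ℓ u v + rho ℓ v w ≤ rho ℓ u w := by
  rcases max_choice (A ℓ u.1 v.1) (B ℓ u.1 v.1) with h1 | h1 <;>
    rcases max_choice (A ℓ v.1 w.1) (B ℓ v.1 w.1) with h2 | h2 <;>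
    rw [rho, rho, rho, h1, h2]
  · exact le_trans (AA_le htri u.1 v.1 w.1) (le_max_left _ _)
  · exact le_trans (AB_le htri u.1 v.1 w.1) (le_max_right _ _)
  · exact le_trans (BA_le htri u.1 v.1 w.1) (le_max_right _ _)
  · exact le_trans (BB_le htri u.1 v.1 w.1) (le_max_right _ _)

lemma rho_refl (hrefl : ∀ x, 0 ≤ ℓ x x) (u : M ℓ) : 0 ≤ rho ℓ u u := by
  refine le_max_of_le_left ?_
  rw [A, if_pos fun k => ⟨k, hrefl (u.1 k)⟩]

lemma causal_rho_trans (htri : ∀ x y z, ℓ x y + ℓ y z ≤ ℓ x z) {u v w : M ℓ}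
    (h1 : 0 ≤ rho ℓ u v) (h2 : 0 ≤ rho ℓ v w) : 0 ≤ rho ℓ u w :=
  le_trans (add_nonneg h1 h2) (rho_triangle htri u v w)

/-- `emb` is an isometry. -/
lemma rho_emb (hbot : ∀ x y, ℓ x y = ⊥ ∨ 0 ≤ ℓ x y)
    (htri : ∀ x y z, ℓ x y + ℓ y z ≤ ℓ x z) (hrefl : ∀ x, 0 ≤ ℓ x x) (x y : X) :
    rho ℓ (emb ℓ hrefl x) (emb ℓ hrefl y) = ℓ x y := by
  refine le_antisymm (max_le ?_ ?_) ?_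
  · rw [A]
    split_ifs with hc
    · obtain ⟨m, hm⟩ := hc 0
      exact hm
    · exact bot_le
  · refine iSup_le fun z => ?_
    have hG : G ℓ (fun _ => x) z = ℓ x z := by
      refine le_antisymm (G_le _ z 0) (le_iInf fun k => le_refl _)
    have hF : F ℓ z (fun _ => y) = ℓ z y := by
      refine le_antisymm (iSup_le fun m => le_refl _) (le_F z (fun _ => y) 0)
    rw [show (emb ℓ hrefl x).1 = (fun _ => x) from rfl,
        show (emb ℓ hrefl y).1 = (fun _ => y) from rfl, hG, hF]
    exact htri x z y
  · refine le_max_of_le_right ?_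
    calc ℓ x y = 0 + ℓ x y := (zero_add _).symm
      _ ≤ ℓ x x + ℓ x y := add_le_add_left (hrefl x) _
      _ ≤ G ℓ (fun _ => x) x + F ℓ x (fun _ => y) := by
          have hG : G ℓ (fun _ => x) x = ℓ x x :=
            le_antisymm (G_le _ x 0) (le_iInf fun k => le_refl _)
          have hF : F ℓ x (fun _ => y) = ℓ x y :=
            le_antisymm (iSup_le fun m => le_refl _) (le_F x (fun _ => y) 0)
          rw [hG, hF]
      _ ≤ B ℓ (fun _ => x) (fun _ => y) := le_B _ _ x

end lemmas2

section diag

variable {X : Type u} {ℓ : X → X → EReal}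

lemma up (htri : ∀ x y z, ℓ x y + ℓ y z ≤ ℓ x z) (hrefl : ∀ x, 0 ≤ ℓ x x)
    (v : M ℓ) {x : X} {m m' : ℕ} (h : m ≤ m') (hx : 0 ≤ ℓ x (v.1 m)) :
    0 ≤ ℓ x (v.1 m') :=
  causal_trans htri hx (mono_le htri hrefl v.2 h)

lemma exists_bound_nat (htri : ∀ x y z, ℓ x y + ℓ y z ≤ ℓ x z) (hrefl : ∀ x, 0 ≤ ℓ x x)
    (v : M ℓ) (g : ℕ → X) :
    ∀ N : ℕ, (∀ i, i < N → ∃ m, 0 ≤ ℓ (g i) (v.1 m)) →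
      ∃ m, ∀ i, i < N → 0 ≤ ℓ (g i) (v.1 m) := by
  intro N
  induction N with
  | zero => exact fun _ => ⟨0, fun i hi => absurd hi (Nat.not_lt_zero i)⟩
  | succ N ih =>
    intro hN
    obtain ⟨m1, hm1⟩ := ih fun i hi => hN i (Nat.lt_succ_of_lt hi)
    obtain ⟨m2, hm2⟩ := hN N (Nat.lt_succ_self N)
    refine ⟨max m1 m2, fun i hi => ?_⟩
    rcases Nat.lt_succ_iff_lt_or_eq.mp hi with hi' | rfl
    · exact up htri hrefl v (le_max_left m1 m2) (hm1 i hi')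
    · exact up htri hrefl v (le_max_right m1 m2) hm2

lemma exists_bound2 (htri : ∀ x y z, ℓ x y + ℓ y z ≤ ℓ x z) (hrefl : ∀ x, 0 ≤ ℓ x x)
    (v : M ℓ) (g : ℕ → ℕ → X) (N2 : ℕ) :
    ∀ N1 : ℕ, (∀ i j, i < N1 → j < N2 → ∃ m, 0 ≤ ℓ (g i j) (v.1 m)) →
      ∃ m, ∀ i j, i < N1 → j < N2 → 0 ≤ ℓ (g i j) (v.1 m) := by
  intro N1
  induction N1 with
  | zero => exact fun _ => ⟨0, fun i j hi => absurd hi (Nat.not_lt_zero i)⟩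
  | succ N ih =>
    intro hN
    obtain ⟨m1, hm1⟩ := ih fun i j hi hj => hN i j (Nat.lt_succ_of_lt hi) hj
    obtain ⟨m2, hm2⟩ := exists_bound_nat htri hrefl v (g N) N2
      (fun j hj => hN N j (Nat.lt_succ_self N) hj)
    refine ⟨max m1 m2, fun i j hi hj => ?_⟩
    rcases Nat.lt_succ_iff_lt_or_eq.mp hi with hi' | rfl
    · exact up htri hrefl v (le_max_left m1 m2) (hm1 i j hi' hj)
    · exact up htri hrefl v (le_max_right m1 m2) (hm2 j hj)

lemma rho_mono_le (hbot : ∀ x y, ℓ x y = ⊥ ∨ 0 ≤ ℓ x y)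
    (htri : ∀ x y z, ℓ x y + ℓ y z ≤ ℓ x z) (hrefl : ∀ x, 0 ≤ ℓ x x)
    (U : ℕ → M ℓ) (hU : ∀ n, 0 ≤ rho ℓ (U n) (U (n + 1))) :
    ∀ {n n' : ℕ}, n ≤ n' → 0 ≤ rho ℓ (U n) (U n') := by
  intro n n' h
  induction n', h using Nat.le_induction with
  | base => exact rho_refl hrefl (U n)
  | succ k hk ih => exact causal_rho_trans htri ih (hU k)

/-- The diagonal sequence construction. -/
lemma exists_diag (hbot : ∀ x y, ℓ x y = ⊥ ∨ 0 ≤ ℓ x y)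
    (htri : ∀ x y z, ℓ x y + ℓ y z ≤ ℓ x z) (hrefl : ∀ x, 0 ≤ ℓ x x)
    (U : ℕ → M ℓ) (hU : ∀ n, 0 ≤ rho ℓ (U n) (U (n + 1))) :
    ∃ w : M ℓ, (∀ n j, ∃ m, 0 ≤ ℓ ((U n).1 j) (w.1 m)) ∧
      (∀ m n, m ≤ n → ∃ j, 0 ≤ ℓ (w.1 m) ((U n).1 j)) := by
  have hcaus : ∀ {n n' : ℕ}, n ≤ n' → ∀ j, ∃ m, 0 ≤ ℓ ((U n).1 j) ((U n').1 m) :=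
    fun {n n'} h => (causal_rho_iff hbot htri (U n) (U n')).mp
      (rho_mono_le hbot htri hrefl U hU h)
  have spec : ∀ n p : ℕ, ∃ m, 0 ≤ ℓ ((U n).1 p) ((U (n + 1)).1 m) ∧
      ∀ i j, i ≤ n → j ≤ n → 0 ≤ ℓ ((U i).1 j) ((U (n + 1)).1 m) := by
    intro n p
    obtain ⟨m1, hm1⟩ := hcaus (Nat.le_succ n) p
    obtain ⟨m2, hm2⟩ := exists_bound2 htri hrefl (U (n + 1)) (fun i j => (U i).1 j) (n + 1)
      (n + 1) (fun i j hi _ => hcaus (le_trans (Nat.le_of_lt_succ hi) (Nat.le_succ n)) j)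
    refine ⟨max m1 m2, up htri hrefl _ (le_max_left m1 m2) hm1, fun i j hi hj =>
      up htri hrefl _ (le_max_right m1 m2) (hm2 i j (Nat.lt_succ_of_le hi) (Nat.lt_succ_of_le hj))⟩
  let σ : ℕ → ℕ := fun n => Nat.rec 0 (fun k prev => (spec k prev).choose) n
  have hchain : ∀ n, 0 ≤ ℓ ((U n).1 (σ n)) ((U (n + 1)).1 (σ (n + 1))) :=
    fun n => ((spec n (σ n)).choose_spec).1
  have hdom : ∀ n i j, i ≤ n → j ≤ n → 0 ≤ ℓ ((U i).1 j) ((U (n + 1)).1 (σ (n + 1))) :=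
    fun n i j hi hj => ((spec n (σ n)).choose_spec).2 i j hi hj
  refine ⟨⟨fun n => (U n).1 (σ n), hchain⟩, ?_, ?_⟩
  · intro n j
    exact ⟨max n j + 1, hdom (max n j) n j (le_max_left n j) (le_max_right n j)⟩
  · intro m n hmn
    exact hcaus hmn (σ m)

/-- The key convergence lemma: a `rho`-monotone sequence converges to any of its
"diagonal upper bounds". -/
lemma tendsto_diag (hbot : ∀ x y, ℓ x y = ⊥ ∨ 0 ≤ ℓ x y)
    (htri : ∀ x y z, ℓ x y + ℓ y z ≤ ℓ x z) (hrefl : ∀ x, 0 ≤ ℓ x x)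
    (U : ℕ → M ℓ) (hU : ∀ n, 0 ≤ rho ℓ (U n) (U (n + 1))) (w : M ℓ)
    (P2 : ∀ n j, ∃ m, 0 ≤ ℓ ((U n).1 j) (w.1 m))
    (P3 : ∀ m n, m ≤ n → ∃ j, 0 ≤ ℓ (w.1 m) ((U n).1 j)) :
    Tendsto U atTop (@nhds _ (topo ℓ) w) := by
  apply (TopologicalSpace.tendsto_nhds_generateFrom_iff).mpr
  rintro s ⟨a, (rfl | rfl | rfl | rfl)⟩ hws
  · -- s = I⁺(a)
    obtain ⟨z, hz⟩ := (chron_rho_iff a w).mp hws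
    obtain ⟨hGa, hFw⟩ := nonneg_parts (G_range hbot a.1 z) (F_range hbot z w.1) hz.le
    by_cases hp : 0 < F ℓ z w.1
    · obtain ⟨m1, hm1⟩ := lt_iSup_iff.mp hp
      refine eventually_atTop.mpr ⟨m1, fun n hn => ?_⟩
      obtain ⟨j, hj⟩ := P3 m1 n hn
      have h2 : 0 < ℓ z ((U n).1 j) :=
        lt_of_lt_of_le (pos_add_of_pos_of_nonneg hm1 hj) (htri _ _ _)
      exact (chron_rho_iff a (U n)).mpr
        ⟨z, pos_add_of_nonneg_of_pos hGa (lt_of_lt_of_le h2 (le_F z (U n).1 j))⟩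
    · have hF0 : F ℓ z w.1 ≤ 0 := not_lt.mp hp
      have hG : 0 < G ℓ a.1 z := by
        by_contra hg
        push_neg at hg
        have hle : G ℓ a.1 z + F ℓ z w.1 ≤ 0 := by
          calc G ℓ a.1 z + F ℓ z w.1 ≤ 0 + 0 := add_le_add hg hF0
            _ = 0 := add_zero 0
        exact absurd hz (not_lt.mpr hle)
      obtain ⟨m0, hm0⟩ := sup_nonneg_elim (fun m => hbot z (w.1 m)) hFw
      refine eventually_atTop.mpr ⟨m0, fun n hn => ?_⟩
      obtain ⟨j, hj⟩ := P3 m0 n hn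
      have h2 : 0 ≤ ℓ z ((U n).1 j) := causal_trans htri hm0 hj
      exact (chron_rho_iff a (U n)).mpr
        ⟨z, pos_add_of_pos_of_nonneg hG (le_trans h2 (le_F z (U n).1 j))⟩
  · -- s = I⁻(a)
    obtain ⟨z, hz⟩ := (chron_rho_iff w a).mp hws
    refine eventually_atTop.mpr ⟨0, fun n _ => ?_⟩
    have hGn : G ℓ w.1 z ≤ G ℓ (U n).1 z := by
      refine le_iInf fun j => ?_
      obtain ⟨m, hm⟩ := P2 n j
      calc G ℓ w.1 z = 0 + G ℓ w.1 z := (zero_add _).symm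
        _ ≤ ℓ ((U n).1 j) (w.1 m) + ℓ (w.1 m) z := add_le_add hm (G_le w.1 z m)
        _ ≤ ℓ ((U n).1 j) z := htri _ _ _
    exact (chron_rho_iff (U n) a).mpr ⟨z, lt_of_lt_of_le hz (add_le_add_left hGn _)⟩
  · -- s = (J⁺ a)ᶜ
    refine eventually_atTop.mpr ⟨0, fun n _ => ?_⟩
    simp only [mem_preimage, mem_compl_iff, mem_setOf_eq] at hws ⊢
    intro h'
    apply hws
    refine (causal_rho_iff hbot htri a w).mpr fun k => ?_
    obtain ⟨j, hj⟩ := (causal_rho_iff hbot htri a (U n)).mp h' k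
    obtain ⟨m, hm⟩ := P2 n j
    exact ⟨m, causal_trans htri hj hm⟩
  · -- s = (J⁻ a)ᶜ
    simp only [mem_compl_iff, mem_setOf_eq] at hws
    by_cases hc : ∃ n0, ∀ n, n0 ≤ n → ¬ 0 ≤ rho ℓ (U n) a
    · obtain ⟨n0, hn0⟩ := hc
      refine eventually_atTop.mpr ⟨n0, fun n hn => ?_⟩
      simp only [mem_preimage, mem_compl_iff, mem_setOf_eq]
      exact hn0 n hn
    · exfalso
      have hall : ∀ n, ∃ n', n ≤ n' ∧ 0 ≤ rho ℓ (U n') a := by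
        intro n
        by_contra hno
        exact hc ⟨n, fun n' hn' h' => hno ⟨n', hn', h'⟩⟩
      apply hws
      refine (causal_rho_iff hbot htri w a).mpr fun m => ?_
      obtain ⟨n', hn', hca⟩ := hall m
      obtain ⟨j, hj⟩ := P3 m n' hn'
      obtain ⟨k, hk⟩ := (causal_rho_iff hbot htri (U n') a).mp hca j
      exact ⟨k, causal_trans htri hj hk⟩

end diag

end FCaux

/-- **Existence of a forward completion** (Theorem 7.2, existence part).
Every Lorentzian pre-length space `(X, ℓ)` admits a forward completion `(X̄, ℓ̄)`. -/
theorem forward_completion_exists {X : Type u} (tX : TopologicalSpace X)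
    (ℓ : X → X → EReal) (h : IsLPLS tX ℓ) :
    ∃ (Y : Type u) (tY : TopologicalSpace Y) (ρ : Y → Y → EReal) (ι : X → Y),
      IsForwardCompletion tX ℓ tY ρ ι := by
  obtain ⟨hbot, htri, hrefl, _, _⟩ := h
  refine ⟨FCaux.M ℓ, FCaux.topo ℓ, FCaux.rho ℓ, FCaux.emb ℓ hrefl, ?_, ?_, ?_, ?_, ?_, ?_⟩
  · -- IsLPLS
    refine ⟨fun u v => FCaux.rho_range hbot u v, fun u v w => FCaux.rho_triangle htri u v w,
      fun u => FCaux.rho_refl hrefl u, fun a => ?_, fun a => ?_⟩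
    · exact TopologicalSpace.isOpen_generateFrom_of_mem ⟨a, Or.inl rfl⟩
    · exact TopologicalSpace.isOpen_generateFrom_of_mem ⟨a, Or.inr (Or.inl rfl)⟩
  · -- ForwardComplete
    intro U xhat hU hbd
    obtain ⟨w, P2, P3⟩ := FCaux.exists_diag hbot htri hrefl U hU
    exact ⟨w, FCaux.tendsto_diag hbot htri hrefl U hU w P2 P3⟩
  · -- closed J⁺
    intro a
    letI := FCaux.topo ℓ
    have ho : IsOpen {z | causal (FCaux.rho ℓ) a z}ᶜ :=
      TopologicalSpace.isOpen_generateFrom_of_mem ⟨a, Or.inr (Or.inr (Or.inl rfl))⟩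
    exact isOpen_compl_iff.mp ho
  · -- closed J⁻
    intro a
    letI := FCaux.topo ℓ
    have ho : IsOpen {z | causal (FCaux.rho ℓ) z a}ᶜ :=
      TopologicalSpace.isOpen_generateFrom_of_mem ⟨a, Or.inr (Or.inr (Or.inr rfl))⟩
    exact isOpen_compl_iff.mp ho
  · -- isometric
    exact fun x y => FCaux.rho_emb hbot htri hrefl x y
  · -- forward density
    intro y
    refine ⟨y.1, fun k => ?_, fun k => ?_, ?_⟩
    · show 0 ≤ FCaux.rho ℓ _ _
      rw [FCaux.rho_emb hbot htri hrefl]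
      exact y.2 k
    · refine (FCaux.causal_rho_iff hbot htri _ _).mpr fun j => ⟨k, hrefl (y.1 k)⟩
    · refine FCaux.tendsto_diag hbot htri hrefl _ ?_ y ?_ ?_
      · intro n
        show 0 ≤ FCaux.rho ℓ _ _
        rw [FCaux.rho_emb hbot htri hrefl]
        exact y.2 n
      · exact fun n j => ⟨n, hrefl (y.1 n)⟩
      · exact fun m n hmn => ⟨0, FCaux.mono_le htri hrefl y.2 hmn⟩

end
end

section
/- Uniqueness of the forward completion. Let (X, ℓ) be a Lorentzian pre-length space. Up to isometry there exists at most one forward completion (X̄, ℓ̄) of (X, ℓ) satisfying: (i) the time separation function τ̄ = max(0, ℓ̄) is continuous; (ii) the causal relation ≤̄ is a closed partial order; (iii) for all x̄ ∈ X̄ \ X one has x̄ ∈ closure(I⁺(x̄)) and x̄ ∈ closure(I⁻(x̄)). That is, any two forward completions satisfying (i)–(iii) are isometric. -/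
open Filter Topology Set

set_option linter.unusedVariables false

universe u v w

noncomputable section

/-- Continuity of the time separation function `τ` (jointly, w.r.t. the product topology). -/
def tauContinuous {X : Type u} (tX : TopologicalSpace X) (ℓ : X → X → EReal) : Prop :=
  letI := tX
  Continuous fun p : X × X => lorTau ℓ p.1 p.2

/-- Closedness of the causal relation in `X × X`. -/
def causalClosed {X : Type u} (tX : TopologicalSpace X) (ℓ : X → X → EReal) : Prop :=
  letI := tX
  IsClosed {p : X × X | causal ℓ p.1 p.2}


/-! ### Auxiliary lemmas for the uniqueness proof -/

section FCHelpers

set_option linter.unusedSectionVars false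

variable {X : Type u} [tX : TopologicalSpace X] {ℓ : X → X → EReal}
variable {Y : Type v} [tY : TopologicalSpace Y] {ρ : Y → Y → EReal} {ι : X → Y}
variable {Z : Type w} [tZ : TopologicalSpace Z] {σ : Z → Z → EReal} {κ : X → Z}

lemma tau_pos_iff {ℓ' : Y → Y → EReal} {a b : Y} :
    0 < lorTau ℓ' a b ↔ chron ℓ' a b := by
  simp [lorTau, chron, lt_max_iff]

lemma causal_trans' (h : IsLPLS tY ρ) {a b c : Y}
    (h1 : causal ρ a b) (h2 : causal ρ b c) : causal ρ a c :=
  le_trans (add_nonneg h1 h2) (h.revTriangle a b c)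

lemma chron_causal_trans (h : IsLPLS tY ρ) {a b c : Y}
    (h1 : chron ρ a b) (h2 : causal ρ b c) : chron ρ a c :=
  lt_of_lt_of_le (lt_of_lt_of_le h1 (le_add_of_nonneg_right h2)) (h.revTriangle a b c)

lemma causal_chron_trans (h : IsLPLS tY ρ) {a b c : Y}
    (h1 : causal ρ a b) (h2 : chron ρ b c) : chron ρ a c :=
  lt_of_lt_of_le (lt_of_lt_of_le h2 (le_add_of_nonneg_left h1)) (h.revTriangle a b c)

lemma tau_isom (hY : IsForwardCompletion tX ℓ tY ρ ι) (hZ : IsForwardCompletion tX ℓ tZ σ κ)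
    (x x' : X) : lorTau σ (κ x) (κ x') = lorTau ρ (ι x) (ι x') := by
  unfold lorTau; rw [hY.isometric, hZ.isometric]

/-- Points of `ι '' X` chronologically above a point in the closure of its own
chronological future come arbitrarily close to it. -/
lemma approx_above (hY : IsForwardCompletion tX ℓ tY ρ ι) {y : Y}
    (hcl : y ∈ closure {w | chron ρ y w}) :
    ∀ U : Set Y, IsOpen U → y ∈ U → ∃ x : X, ι x ∈ U ∧ chron ρ y (ι x) := by
  intro U hU hyU
  obtain ⟨w, hwU, hw⟩ := mem_closure_iff.mp hcl U hU hyU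
  obtain ⟨u, -, -, hu3⟩ := hY.fwdDense w
  have hV : IsOpen (U ∩ {v | chron ρ y v}) := hU.inter (hY.lpls.open_Iplus y)
  obtain ⟨k, hk⟩ := (hu3.eventually (hV.mem_nhds ⟨hwU, hw⟩)).exists
  exact ⟨u k, hk.1, hk.2⟩

lemma approx_below (hY : IsForwardCompletion tX ℓ tY ρ ι) {y : Y}
    (hcl : y ∈ closure {w | chron ρ w y}) :
    ∀ U : Set Y, IsOpen U → y ∈ U → ∃ x : X, ι x ∈ U ∧ chron ρ (ι x) y := by
  intro U hU hyU
  obtain ⟨w, hwU, hw⟩ := mem_closure_iff.mp hcl U hU hyU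
  obtain ⟨u, -, -, hu3⟩ := hY.fwdDense w
  have hV : IsOpen (U ∩ {v | chron ρ v y}) := hU.inter (hY.lpls.open_Iminus y)
  obtain ⟨k, hk⟩ := (hu3.eventually (hV.mem_nhds ⟨hwU, hw⟩)).exists
  exact ⟨u k, hk.1, hk.2⟩

lemma causal_of_approx_above (hY : IsForwardCompletion tX ℓ tY ρ ι) {w c : Y}
    (happ : ∀ U : Set Y, IsOpen U → w ∈ U → ∃ x : X, ι x ∈ U ∧ chron ρ w (ι x))
    (hcond : ∀ x : X, chron ρ w (ι x) → causal ρ c (ι x)) : causal ρ c w := by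
  have hmem : w ∈ closure {v | causal ρ c v} := by
    refine mem_closure_iff.mpr fun U hU hwU => ?_
    obtain ⟨x, hxU, hx⟩ := happ U hU hwU
    exact ⟨ι x, hxU, hcond x hx⟩
  exact (hY.closed_Jplus c).closure_subset hmem

lemma causal_of_approx_below (hY : IsForwardCompletion tX ℓ tY ρ ι) {u c : Y}
    (happ : ∀ U : Set Y, IsOpen U → u ∈ U → ∃ x : X, ι x ∈ U ∧ chron ρ (ι x) u)
    (hcond : ∀ x : X, chron ρ (ι x) u → causal ρ (ι x) c) : causal ρ u c := by
  have hmem : u ∈ closure {v | causal ρ v c} := by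
    refine mem_closure_iff.mpr fun U hU huU => ?_
    obtain ⟨x, hxU, hx⟩ := happ U hU huU
    exact ⟨ι x, hxU, hcond x hx⟩
  exact (hY.closed_Jminus c).closure_subset hmem

/-- A point not in the range of `ι` is determined by the time separations to and from
points of `ι '' X`. -/
lemma uniq_of_tau_eq (hY : IsForwardCompletion tX ℓ tY ρ ι)
    (hant : ∀ a b : Y, causal ρ a b → causal ρ b a → a = b) {y y' : Y}
    (hclP : y ∈ closure {w | chron ρ y w}) (hclM : y ∈ closure {w | chron ρ w y})
    (heq1 : ∀ x : X, lorTau ρ (ι x) y = lorTau ρ (ι x) y')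
    (heq2 : ∀ x : X, lorTau ρ y (ι x) = lorTau ρ y' (ι x)) : y = y' := by
  have h1 : causal ρ y y' := by
    refine causal_of_approx_below hY (approx_below hY hclM) fun x hx => ?_
    have h0 : 0 < lorTau ρ (ι x) y := tau_pos_iff.mpr hx
    rw [heq1 x] at h0
    exact le_of_lt (tau_pos_iff.mp h0)
  have h2 : causal ρ y' y := by
    refine causal_of_approx_above hY (approx_above hY hclP) fun x hx => ?_
    have h0 : 0 < lorTau ρ y (ι x) := tau_pos_iff.mpr hx
    rw [heq2 x] at h0
    exact le_of_lt (tau_pos_iff.mp h0)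
  exact hant y y' h1 h2

/-- Two points of the two completions match if they have the same time separations
to and from all points of `X`. -/
def MatchTau (ρ : Y → Y → EReal) (ι : X → Y) (σ : Z → Z → EReal) (κ : X → Z)
    (y : Y) (z : Z) : Prop :=
  ∀ x : X, lorTau σ (κ x) z = lorTau ρ (ι x) y ∧ lorTau σ z (κ x) = lorTau ρ y (ι x)

lemma matchTau_symm {y : Y} {z : Z} (h : MatchTau ρ ι σ κ y z) : MatchTau σ κ ρ ι z y :=
  fun x => ⟨(h x).1.symm, (h x).2.symm⟩

/-- Existence of a matching point, via forward completeness. -/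
lemma matchTau_exists (hY : IsForwardCompletion tX ℓ tY ρ ι)
    (hZ : IsForwardCompletion tX ℓ tZ σ κ)
    (hτY : tauContinuous tY ρ) (hτZ : tauContinuous tZ σ)
    (hbdY : ∀ y : Y, y ∉ Set.range ι →
      y ∈ closure {w | chron ρ y w} ∧ y ∈ closure {w | chron ρ w y})
    (y : Y) : ∃ z : Z, MatchTau ρ ι σ κ y z := by
  obtain ⟨u, hu1, hu2, hu3⟩ := hY.fwdDense y
  have hmono : ∀ k, causal σ (κ (u k)) (κ (u (k + 1))) := by
    intro k
    show (0 : EReal) ≤ σ _ _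
    rw [hZ.isometric, ← hY.isometric]
    exact hu1 k
  obtain ⟨zb, hzb⟩ : ∃ zb : Z, ∀ k, causal σ (κ (u k)) zb := by
    by_cases hy : y ∈ Set.range ι
    · obtain ⟨xh, rfl⟩ := hy
      refine ⟨κ xh, fun k => ?_⟩
      show (0 : EReal) ≤ σ _ _
      rw [hZ.isometric, ← hY.isometric]
      exact hu2 k
    · obtain ⟨v, -, hv⟩ := approx_above hY (hbdY y hy).1 Set.univ isOpen_univ (mem_univ y)
      refine ⟨κ v, fun k => ?_⟩
      have hc : chron ρ (ι (u k)) (ι v) := causal_chron_trans hY.lpls (hu2 k) hv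
      show (0 : EReal) ≤ σ _ _
      rw [hZ.isometric, ← hY.isometric]
      exact le_of_lt hc
  obtain ⟨z, hz⟩ := hZ.fwdComplete (fun k => κ (u k)) zb hmono hzb
  have hcY : Continuous fun p : Y × Y => lorTau ρ p.1 p.2 := hτY
  have hcZ : Continuous fun p : Z × Z => lorTau σ p.1 p.2 := hτZ
  refine ⟨z, fun x => ⟨?_, ?_⟩⟩
  · have t1 : Tendsto (fun k => lorTau σ (κ x) (κ (u k))) atTop (nhds (lorTau σ (κ x) z)) :=
      (hcZ.tendsto (κ x, z)).comp (tendsto_const_nhds.prodMk_nhds hz)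
    have t2 : Tendsto (fun k => lorTau ρ (ι x) (ι (u k))) atTop (nhds (lorTau ρ (ι x) y)) :=
      (hcY.tendsto (ι x, y)).comp (tendsto_const_nhds.prodMk_nhds hu3)
    have heqf : (fun k => lorTau σ (κ x) (κ (u k))) = fun k => lorTau ρ (ι x) (ι (u k)) :=
      funext fun k => tau_isom hY hZ x (u k)
    exact tendsto_nhds_unique (heqf ▸ t1) t2
  · have t1 : Tendsto (fun k => lorTau σ (κ (u k)) (κ x)) atTop (nhds (lorTau σ z (κ x))) :=
      (hcZ.tendsto (z, κ x)).comp (hz.prodMk_nhds tendsto_const_nhds)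
    have t2 : Tendsto (fun k => lorTau ρ (ι (u k)) (ι x)) atTop (nhds (lorTau ρ y (ι x))) :=
      (hcY.tendsto (y, ι x)).comp (hu3.prodMk_nhds tendsto_const_nhds)
    have heqf : (fun k => lorTau σ (κ (u k)) (κ x)) = fun k => lorTau ρ (ι (u k)) (ι x) :=
      funext fun k => tau_isom hY hZ (u k) x
    exact tendsto_nhds_unique (heqf ▸ t1) t2

/-- Matching maps new points to new points. -/
lemma matchTau_notRange (hY : IsForwardCompletion tX ℓ tY ρ ι)
    (hZ : IsForwardCompletion tX ℓ tZ σ κ)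
    (hantY : ∀ a b : Y, causal ρ a b → causal ρ b a → a = b)
    (hbdY : ∀ y : Y, y ∉ Set.range ι →
      y ∈ closure {w | chron ρ y w} ∧ y ∈ closure {w | chron ρ w y})
    {y : Y} {z : Z} (hm : MatchTau ρ ι σ κ y z) (hy : y ∉ Set.range ι) :
    z ∉ Set.range κ := by
  rintro ⟨x₀, rfl⟩
  refine hy ⟨x₀, ?_⟩
  refine (uniq_of_tau_eq hY hantY (hbdY y hy).1 (hbdY y hy).2
    (fun x => ?_) (fun x => ?_)).symm
  · exact ((hm x).1.symm.trans (tau_isom hY hZ x x₀))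
  · exact ((hm x).2.symm.trans (tau_isom hY hZ x₀ x))

lemma kappa_congr (hY : IsForwardCompletion tX ℓ tY ρ ι)
    (hZ : IsForwardCompletion tX ℓ tZ σ κ)
    (hantZ : ∀ a b : Z, causal σ a b → causal σ b a → a = b)
    {x x' : X} (he : ι x = ι x') : κ x = κ x' := by
  have h1 : (0 : EReal) ≤ ℓ x x' := by
    rw [← hY.isometric, he]; exact hY.lpls.refl_nonneg _
  have h2 : (0 : EReal) ≤ ℓ x' x := by
    rw [← hY.isometric, he]; exact hY.lpls.refl_nonneg _
  refine hantZ _ _ ?_ ?_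
  · show (0 : EReal) ≤ σ _ _; rw [hZ.isometric]; exact h1
  · show (0 : EReal) ≤ σ _ _; rw [hZ.isometric]; exact h2

/-- A good pair: matching time separations, and compatibility with the embeddings. -/
def GoodPair (ρ : Y → Y → EReal) (ι : X → Y) (σ : Z → Z → EReal) (κ : X → Z)
    (y : Y) (z : Z) : Prop :=
  MatchTau ρ ι σ κ y z ∧ (∀ x : X, y = ι x → z = κ x) ∧ (∀ x : X, z = κ x → y = ι x)

lemma goodPair_symm {y : Y} {z : Z} (h : GoodPair ρ ι σ κ y z) : GoodPair σ κ ρ ι z y :=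
  ⟨matchTau_symm h.1, h.2.2, h.2.1⟩

lemma goodPair_exists (hY : IsForwardCompletion tX ℓ tY ρ ι)
    (hZ : IsForwardCompletion tX ℓ tZ σ κ)
    (hτY : tauContinuous tY ρ) (hτZ : tauContinuous tZ σ)
    (hantY : ∀ a b : Y, causal ρ a b → causal ρ b a → a = b)
    (hantZ : ∀ a b : Z, causal σ a b → causal σ b a → a = b)
    (hbdY : ∀ y : Y, y ∉ Set.range ι →
      y ∈ closure {w | chron ρ y w} ∧ y ∈ closure {w | chron ρ w y})
    (y : Y) : ∃ z : Z, GoodPair ρ ι σ κ y z := by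
  by_cases hy : y ∈ Set.range ι
  · obtain ⟨xh, rfl⟩ := hy
    refine ⟨κ xh, fun x => ⟨tau_isom hY hZ x xh, tau_isom hY hZ xh x⟩, ?_, ?_⟩
    · exact fun x hx => kappa_congr hY hZ hantZ hx
    · exact fun x hx => kappa_congr hZ hY hantY hx
  · obtain ⟨z, hz⟩ := matchTau_exists hY hZ hτY hτZ hbdY y
    have hznr : z ∉ Set.range κ := matchTau_notRange hY hZ hantY hbdY hz hy
    exact ⟨z, hz, fun x hx => absurd ⟨x, hx.symm⟩ hy, fun x hx => absurd ⟨x, hx.symm⟩ hznr⟩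

lemma goodPair_unique (hY : IsForwardCompletion tX ℓ tY ρ ι)
    (hZ : IsForwardCompletion tX ℓ tZ σ κ)
    (hantZ : ∀ a b : Z, causal σ a b → causal σ b a → a = b)
    (hbdZ : ∀ z : Z, z ∉ Set.range κ →
      z ∈ closure {w | chron σ z w} ∧ z ∈ closure {w | chron σ w z})
    {y : Y} {z z' : Z} (h : GoodPair ρ ι σ κ y z) (h' : GoodPair ρ ι σ κ y z') : z = z' := by
  by_cases hy : y ∈ Set.range ι
  · obtain ⟨x, rfl⟩ := hy
    rw [h.2.1 x rfl, h'.2.1 x rfl]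
  · have hz : z ∉ Set.range κ := fun ⟨x, hx⟩ => hy ⟨x, (h.2.2 x hx.symm).symm⟩
    refine uniq_of_tau_eq hZ hantZ (hbdZ z hz).1 (hbdZ z hz).2 (fun x => ?_) (fun x => ?_)
    · exact (h.1 x).1.trans (h'.1 x).1.symm
    · exact (h.1 x).2.trans (h'.1 x).2.symm

/-- Causality transfers along good pairs. -/
lemma goodPair_causal (hY : IsForwardCompletion tX ℓ tY ρ ι)
    (hZ : IsForwardCompletion tX ℓ tZ σ κ)
    (hbdZ : ∀ z : Z, z ∉ Set.range κ →
      z ∈ closure {w | chron σ z w} ∧ z ∈ closure {w | chron σ w z})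
    {a b : Y} {z w : Z} (ha : GoodPair ρ ι σ κ a z) (hb : GoodPair ρ ι σ κ b w)
    (hab : causal ρ a b) : causal σ z w := by
  by_cases hbr : b ∈ Set.range ι
  · obtain ⟨xb, rfl⟩ := hbr
    have hw : w = κ xb := hb.2.1 xb rfl
    subst hw
    by_cases har : a ∈ Set.range ι
    · obtain ⟨xa, rfl⟩ := har
      have hz : z = κ xa := ha.2.1 xa rfl
      subst hz
      show (0 : EReal) ≤ σ _ _
      rw [hZ.isometric, ← hY.isometric]
      exact hab
    · have hznr : z ∉ Set.range κ := fun ⟨x, hx⟩ => har ⟨x, (ha.2.2 x hx.symm).symm⟩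
      refine causal_of_approx_below hZ (approx_below hZ (hbdZ z hznr).2) fun x hx => ?_
      have h0 : 0 < lorTau σ (κ x) z := tau_pos_iff.mpr hx
      rw [(ha.1 x).1] at h0
      have h1 : chron ρ (ι x) a := tau_pos_iff.mp h0
      have h2 : chron ρ (ι x) (ι xb) := chron_causal_trans hY.lpls h1 hab
      show (0 : EReal) ≤ σ _ _
      rw [hZ.isometric, ← hY.isometric]
      exact le_of_lt h2
  · have hwnr : w ∉ Set.range κ := fun ⟨x, hx⟩ => hbr ⟨x, (hb.2.2 x hx.symm).symm⟩
    refine causal_of_approx_above hZ (approx_above hZ (hbdZ w hwnr).1) fun x hx => ?_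
    have h0 : 0 < lorTau σ w (κ x) := tau_pos_iff.mpr hx
    rw [(hb.1 x).2] at h0
    have h1 : chron ρ b (ι x) := tau_pos_iff.mp h0
    have h2 : chron ρ a (ι x) := causal_chron_trans hY.lpls hab h1
    have h3 : 0 < lorTau σ z (κ x) := by
      rw [(ha.1 x).2]
      exact tau_pos_iff.mpr h2
    exact le_of_lt (tau_pos_iff.mp h3)

/-- The time separation can only increase along good pairs (on causally related points). -/
lemma goodPair_tau_le (hY : IsForwardCompletion tX ℓ tY ρ ι)
    (hZ : IsForwardCompletion tX ℓ tZ σ κ)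
    (hτZ : tauContinuous tZ σ)
    (hbdZ : ∀ z : Z, z ∉ Set.range κ →
      z ∈ closure {w | chron σ z w} ∧ z ∈ closure {w | chron σ w z})
    {a b : Y} {z w : Z} (ha : GoodPair ρ ι σ κ a z) (hb : GoodPair ρ ι σ κ b w)
    (hab : causal ρ a b) : lorTau ρ a b ≤ lorTau σ z w := by
  by_cases hbr : b ∈ Set.range ι
  · obtain ⟨xb, rfl⟩ := hbr
    have hw : w = κ xb := hb.2.1 xb rfl
    subst hw
    exact le_of_eq ((ha.1 xb).2).symm
  · have hwnr : w ∉ Set.range κ := fun ⟨x, hx⟩ => hbr ⟨x, (hb.2.2 x hx.symm).symm⟩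
    have hcZ : Continuous fun p : Z × Z => lorTau σ p.1 p.2 := hτZ
    have hcont : Continuous fun v : Z => lorTau σ z v :=
      hcZ.comp (continuous_const.prodMk continuous_id)
    have hC : IsClosed {v : Z | lorTau ρ a b ≤ lorTau σ z v} :=
      isClosed_le continuous_const hcont
    have hmem : w ∈ closure {v : Z | lorTau ρ a b ≤ lorTau σ z v} := by
      refine mem_closure_iff.mpr fun U hU hwU => ?_
      obtain ⟨x, hxU, hx⟩ := approx_above hZ (hbdZ w hwnr).1 U hU hwU
      refine ⟨κ x, hxU, ?_⟩
      have h0 : 0 < lorTau σ w (κ x) := tau_pos_iff.mpr hx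
      rw [(hb.1 x).2] at h0
      have h1 : chron ρ b (ι x) := tau_pos_iff.mp h0
      have h2 : ρ a b ≤ ρ a (ι x) :=
        le_trans (le_add_of_nonneg_right (le_of_lt h1)) (hY.lpls.revTriangle a b (ι x))
      show lorTau ρ a b ≤ lorTau σ z (κ x)
      rw [(ha.1 x).2]
      calc lorTau ρ a b = ρ a b := max_eq_right hab
        _ ≤ ρ a (ι x) := h2
        _ ≤ lorTau ρ a (ι x) := le_max_right _ _
    exact hC.closure_subset hmem

end FCHelpers

/-- **Uniqueness of the forward completion** (Theorem 7.2, uniqueness part).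
Any two forward completions of a Lorentzian pre-length space `(X, ℓ)` satisfying
(i) continuity of the time separation function, (ii) the causal relation is a closed
partial order, (iii) every new point is in the closure of its own chronological future
and past, are isometric. -/
theorem forward_completion_unique {X : Type u} (tX : TopologicalSpace X)
    (ℓ : X → X → EReal) (h : IsLPLS tX ℓ)
    {Y : Type v} (tY : TopologicalSpace Y) (ρ : Y → Y → EReal) (ι : X → Y)
    {Z : Type w} (tZ : TopologicalSpace Z) (σ : Z → Z → EReal) (κ : X → Z)
    (hY : IsForwardCompletion tX ℓ tY ρ ι)
    (hZ : IsForwardCompletion tX ℓ tZ σ κ)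
    -- (i) continuity of the time separation functions
    (hτY : tauContinuous tY ρ) (hτZ : tauContinuous tZ σ)
    -- (ii) the causal relations are closed partial orders
    (hclY : causalClosed tY ρ) (hclZ : causalClosed tZ σ)
    (hantY : ∀ a b : Y, causal ρ a b → causal ρ b a → a = b)
    (hantZ : ∀ a b : Z, causal σ a b → causal σ b a → a = b)
    -- (iii) points of the completion not coming from `X` lie in the closure of their
    -- own chronological future and past
    (hbdY : ∀ y : Y, y ∉ Set.range ι →
      y ∈ @closure Y tY {z | chron ρ y z} ∧ y ∈ @closure Y tY {z | chron ρ z y})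
    (hbdZ : ∀ z : Z, z ∉ Set.range κ →
      z ∈ @closure Z tZ {w | chron σ z w} ∧ z ∈ @closure Z tZ {w | chron σ w z}) :
    ∃ f : Y → Z, Function.Bijective f ∧ ∀ a b : Y, σ (f a) (f b) = ρ a b := by
  letI := tX
  letI := tY
  letI := tZ
  have gpY : ∀ y : Y, ∃ z : Z, GoodPair ρ ι σ κ y z :=
    goodPair_exists hY hZ hτY hτZ hantY hantZ hbdY
  have gpZ : ∀ z : Z, ∃ y : Y, GoodPair σ κ ρ ι z y :=
    goodPair_exists hZ hY hτZ hτY hantZ hantY hbdZ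
  choose f hf using gpY
  refine ⟨f, ⟨?_, ?_⟩, ?_⟩
  · intro a b hab
    have h1 : GoodPair σ κ ρ ι (f a) a := goodPair_symm (hf a)
    have h2 : GoodPair σ κ ρ ι (f a) b := by rw [hab]; exact goodPair_symm (hf b)
    exact goodPair_unique hZ hY hantY hbdY h1 h2
  · intro z
    obtain ⟨y, hy⟩ := gpZ z
    exact ⟨y, goodPair_unique hY hZ hantZ hbdZ (hf y) (goodPair_symm hy)⟩
  · intro a b
    rcases hY.lpls.bot_or_nonneg a b with hbot | hcaus
    · rcases hZ.lpls.bot_or_nonneg (f a) (f b) with hbot' | hcaus'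
      · rw [hbot', hbot]
      · exfalso
        have hc : causal ρ a b :=
          goodPair_causal hZ hY hbdY (goodPair_symm (hf a)) (goodPair_symm (hf b)) hcaus'
        rw [causal, hbot] at hc
        simp at hc
    · have hc2 : causal σ (f a) (f b) := goodPair_causal hY hZ hbdZ (hf a) (hf b) hcaus
      have le1 : lorTau ρ a b ≤ lorTau σ (f a) (f b) :=
        goodPair_tau_le hY hZ hτZ hbdZ (hf a) (hf b) hcaus
      have le2 : lorTau σ (f a) (f b) ≤ lorTau ρ a b :=
        goodPair_tau_le hZ hY hτY hbdY (goodPair_symm (hf a)) (goodPair_symm (hf b)) hc2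
      have heq : lorTau σ (f a) (f b) = lorTau ρ a b := le_antisymm le2 le1
      rw [lorTau, lorTau, max_eq_right hcaus, max_eq_right hc2] at heq
      exact heq


end
end

section
/- Time separation quotient preserves limits. Let (X_n, ℓ_n, o_n, 𝒰_n) →pLGH (X, ℓ, o, 𝒰) (respectively, strongly), with 𝒰 = (U_k)_{k∈ℕ}. Define on X the equivalence relation x ∼ y iff ℓ(x,z) = ℓ(y,z) and ℓ(z,x) = ℓ(z,y) for all z ∈ X, let π : X → X/∼ be the quotient map, and let ℓ^∼([x],[y]) := ℓ(x,y) be the quotient time separation on X/∼ with the quotient topology. Then (X_n, ℓ_n, o_n, 𝒰_n) →pLGH (X/∼, ℓ^∼, π(o), (π(U_k))_{k∈ℕ}) (respectively, strongly). -/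
open Filter Topology Set

set_option linter.unusedVariables false

universe u v w

noncomputable section

/-- An ε-net for `A`: a finite collection of causal diamonds (given by their pairs of
vertices) of timelike diameter at most `ε` covering `A`. -/
def IsLorNet {X : Type u} (ℓ : X → X → EReal) (ε : ℝ) (A : Set X)
    (S : Finset (X × X)) : Prop :=
  (∀ pq ∈ S, lorTau ℓ pq.1 pq.2 ≤ (ε : EReal)) ∧
  A ⊆ ⋃ pq ∈ S, diamondJ ℓ pq.1 pq.2

/-- The set of vertices of a collection of causal diamonds. -/
def netVerts {X : Type u} (S : Finset (X × X)) : Set X :=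
  {x | ∃ pq ∈ S, pq.1 = x ∨ pq.2 = x}

/-- `|a - b|` with the conventions `±∞ − ±∞ = 0` and `±∞ − ∓∞ = +∞`. -/
def lorDiff (a b : EReal) : EReal :=
  if a = b then 0
  else if a = ⊥ ∨ b = ⊥ ∨ a = ⊤ ∨ b = ⊤ then ⊤
  else ((|a.toReal - b.toReal| : ℝ) : EReal)

/-- A correspondence between `A ⊆ X` and `B ⊆ Y`. -/
def IsCorresp {X : Type u} {Y : Type v} (R : Set (X × Y)) (A : Set X) (B : Set Y) : Prop :=
  (∀ p ∈ R, p.1 ∈ A ∧ p.2 ∈ B) ∧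
  (∀ a ∈ A, ∃ b ∈ B, (a, b) ∈ R) ∧
  (∀ b ∈ B, ∃ a ∈ A, (a, b) ∈ R)

/-- The distortion of a relation `R ⊆ X × Y` w.r.t. time separations `ℓ, ρ`. -/
def distortion {X : Type u} {Y : Type v} (ℓ : X → X → EReal) (ρ : Y → Y → EReal)
    (R : Set (X × Y)) : EReal :=
  ⨆ p ∈ R, ⨆ q ∈ R, lorDiff (ℓ p.1 q.1) (ρ p.2 q.2)

/-- The graph of `f` restricted to `A`. -/
def lorGraphOn {X : Type u} {Y : Type v} (f : X → Y) (A : Set X) : Set (X × Y) :=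
  (fun x => (x, f x)) '' A

/-- `f` realizes a correspondence between `A` and `B`. -/
def RealizesCorresp {X : Type u} {Y : Type v} (f : X → Y) (A : Set X) (B : Set Y) : Prop :=
  IsCorresp (lorGraphOn f A) A B

/-- The distortion of the map `f` on `A`. -/
def mapDistortion {X : Type u} {Y : Type v} (ℓ : X → X → EReal) (ρ : Y → Y → EReal)
    (f : X → Y) (A : Set X) : EReal :=
  distortion ℓ ρ (lorGraphOn f A)

/-- Clauses (i)+(ii) of LGH convergence of subsets: finite ε-nets of the same cardinality
with correspondences of the vertices whose distortions tend to `0`. -/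
def LGHNets {Xn : ℕ → Type u} (ℓn : ∀ n, Xn n → Xn n → EReal) (An : ∀ n, Set (Xn n))
    {X : Type v} (ℓ : X → X → EReal) (A : Set X) : Prop :=
  ∀ ε : ℝ, 0 < ε → ∃ n₀ : ℕ, ∃ S : Finset (X × X),
    ∃ Sn : ∀ n, Finset (Xn n × Xn n), ∃ R : ∀ n, Set (Xn n × X),
      IsLorNet ℓ ε A S ∧
      (∀ n, n₀ ≤ n → IsLorNet (ℓn n) ε (An n) (Sn n) ∧ (Sn n).card = S.card ∧
        IsCorresp (R n) (netVerts (Sn n)) (netVerts S)) ∧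
      Tendsto (fun n => distortion (ℓn n) ℓ (R n)) atTop (nhds 0)

/-- Clause (iii) of LGH convergence of subsets: the extension property of correspondences. -/
def LGHExtension {Xn : ℕ → Type u} (ℓn : ∀ n, Xn n → Xn n → EReal) (An : ∀ n, Set (Xn n))
    {X : Type v} (ℓ : X → X → EReal) (A : Set X) : Prop :=
  ∀ l : ℕ, 1 ≤ l →
  ∀ S S' : Finset (X × X), IsLorNet ℓ (1 / (l : ℝ)) A S →
    IsLorNet ℓ (1 / ((l : ℝ) + 1)) A S' →
  ∀ Sn Sn' : ∀ n, Finset (Xn n × Xn n),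
    (∀ n, IsLorNet (ℓn n) (1 / (l : ℝ)) (An n) (Sn n)) →
    (∀ n, IsLorNet (ℓn n) (1 / ((l : ℝ) + 1)) (An n) (Sn' n)) →
  ∀ f : ∀ n, X → Xn n, (∀ n, RealizesCorresp (f n) (netVerts S) (netVerts (Sn n))) →
  ∀ n : ℕ, ∃ n', n ≤ n' ∧ ∃ g : X → Xn n',
    (∀ x ∈ netVerts S, g x = f n' x) ∧
    RealizesCorresp g (netVerts S ∪ netVerts S') (netVerts (Sn n') ∪ netVerts (Sn' n')) ∧
    mapDistortion ℓ (ℓn n') g (netVerts S ∪ netVerts S') ≤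
      mapDistortion ℓ (ℓn n') (f n') (netVerts S)

/-- Clause (iv) of LGH convergence of subsets (forward density), with respect to a
relation `rel` (the causal relation for plain convergence, the chronological relation
for strong convergence). -/
def LGHFwdDenseWith {X : Type v} (tX : TopologicalSpace X) (ℓ : X → X → EReal)
    (rel : X → X → Prop) (A : Set X) : Prop :=
  ∀ S : ℕ → Finset (X × X), (∀ l : ℕ, 1 ≤ l → IsLorNet ℓ (1 / (l : ℝ)) A (S l)) →
    ∀ x ∈ A \ ⋃ l ∈ {l : ℕ | 1 ≤ l}, netVerts (S l),
      ∃ u : ℕ → X, (∀ k, u k ∈ ⋃ l ∈ {l : ℕ | 1 ≤ l}, netVerts (S l)) ∧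
        (∀ k, rel (u k) (u (k + 1))) ∧ (∀ k, rel (u k) x) ∧
        Tendsto u atTop (@nhds X tX x)

/-- Lorentzian Gromov–Hausdorff convergence of the subsets `An n ⊆ Xn n` to `A ⊆ X`. -/
def LGHConv (Xn : ℕ → Type u) (ℓn : ∀ n, Xn n → Xn n → EReal) (An : ∀ n, Set (Xn n))
    (X : Type v) (tX : TopologicalSpace X) (ℓ : X → X → EReal) (A : Set X) : Prop :=
  LGHNets ℓn An ℓ A ∧ LGHExtension ℓn An ℓ A ∧ LGHFwdDenseWith tX ℓ (causal ℓ) A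

/-- Strong Lorentzian Gromov–Hausdorff convergence of subsets (timelike forward density). -/
def LGHConvStrong (Xn : ℕ → Type u) (ℓn : ∀ n, Xn n → Xn n → EReal) (An : ∀ n, Set (Xn n))
    (X : Type v) (tX : TopologicalSpace X) (ℓ : X → X → EReal) (A : Set X) : Prop :=
  LGHNets ℓn An ℓ A ∧ LGHExtension ℓn An ℓ A ∧ LGHFwdDenseWith tX ℓ (chron ℓ) A

/-- A covered Lorentzian pre-length space `(X, ℓ, o, U)`. -/
structure IsCoveredLPLS {X : Type u} (tX : TopologicalSpace X) (ℓ : X → X → EReal)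
    (o : X) (U : ℕ → Set X) : Prop where
  lpls : IsLPLS tX ℓ
  iUnion_eq : (⋃ k, U k) = Set.univ
  mono : ∀ k, U k ⊆ U (k + 1)
  base_mem : ∀ k, o ∈ U k
  tau_bdd : ∀ k, ∃ T : ℝ, ∀ x ∈ U k, ∀ y ∈ U k, lorTau ℓ x y ≤ (T : EReal)

/-- Pointed Lorentzian Gromov–Hausdorff convergence of covered Lorentzian pre-length
spaces: LGH convergence of the `k`-th covering sets, for every `k`. -/
def pLGHConv (Xn : ℕ → Type u) (tXn : ∀ n, TopologicalSpace (Xn n))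
    (ℓn : ∀ n, Xn n → Xn n → EReal) (on' : ∀ n, Xn n) (Un : ∀ n, ℕ → Set (Xn n))
    (X : Type v) (tX : TopologicalSpace X) (ℓ : X → X → EReal) (o : X)
    (U : ℕ → Set X) : Prop :=
  ∀ k, LGHConv Xn ℓn (fun n => Un n k) X tX ℓ (U k)

/-- Strong pointed Lorentzian Gromov–Hausdorff convergence. -/
def pLGHConvStrong (Xn : ℕ → Type u) (tXn : ∀ n, TopologicalSpace (Xn n))
    (ℓn : ∀ n, Xn n → Xn n → EReal) (on' : ∀ n, Xn n) (Un : ∀ n, ℕ → Set (Xn n))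
    (X : Type v) (tX : TopologicalSpace X) (ℓ : X → X → EReal) (o : X)
    (U : ℕ → Set X) : Prop :=
  ∀ k, LGHConvStrong Xn ℓn (fun n => Un n k) X tX ℓ (U k)


/-- The relation identifying points with the same time separations from all other
points. -/
def lorSetoid {X : Type v} (ℓ : X → X → EReal) : Setoid X where
  r x y := ∀ z, ℓ x z = ℓ y z ∧ ℓ z x = ℓ z y
  iseqv := ⟨fun _ _ => ⟨rfl, rfl⟩,
    fun h z => ⟨(h z).1.symm, (h z).2.symm⟩,
    fun h1 h2 z => ⟨(h1 z).1.trans (h2 z).1, (h1 z).2.trans (h2 z).2⟩⟩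

/-- The quotient time separation function on `X/∼`. -/
def lorQuotSep {X : Type v} (ℓ : X → X → EReal) :
    Quotient (lorSetoid ℓ) → Quotient (lorSetoid ℓ) → EReal :=
  Quotient.lift₂ ℓ fun a₁ b₁ a₂ b₂ ha hb =>
    ((ha b₁).1).trans ((hb a₂).2)

/-- The quotient topology on `X/∼`. -/
def lorQuotTop {X : Type v} (tX : TopologicalSpace X) (ℓ : X → X → EReal) :
    TopologicalSpace (Quotient (lorSetoid ℓ)) :=
  TopologicalSpace.coinduced (Quotient.mk (lorSetoid ℓ)) tX

/- ==================== Auxiliary lemmas ==================== -/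

section Aux

lemma lorDiff_nonneg (a b : EReal) : 0 ≤ lorDiff a b := by
  unfold lorDiff
  split_ifs
  · exact le_rfl
  · exact le_top
  · exact_mod_cast abs_nonneg _

lemma lorDiff_comm (a b : EReal) : lorDiff a b = lorDiff b a := by
  unfold lorDiff
  by_cases hab : a = b
  · simp [hab]
  · have hba : ¬ b = a := fun h => hab h.symm
    rw [if_neg hab, if_neg hba]
    by_cases h2 : a = ⊥ ∨ b = ⊥ ∨ a = ⊤ ∨ b = ⊤
    · rw [if_pos h2, if_pos (by tauto)]
    · rw [if_neg h2, if_neg (by tauto), abs_sub_comm]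

lemma lorDiff_le_coe {a b : EReal} {s d : ℝ} (hb : b = (s : EReal))
    (hd : lorDiff a b ≤ (d : EReal)) :
    ∃ r : ℝ, a = (r : EReal) ∧ |r - s| ≤ d := by
  have hd0' : (0:ℝ) ≤ d := by exact_mod_cast le_trans (lorDiff_nonneg a b) hd
  unfold lorDiff at hd
  split_ifs at hd with h1 h2
  · exact ⟨s, by rw [h1, hb], by simpa using hd0'⟩
  · exact absurd (top_le_iff.mp hd) (EReal.coe_ne_top d)
  · push_neg at h2
    obtain ⟨hab, hbb, hat, hbt⟩ := h2
    refine ⟨a.toReal, (EReal.coe_toReal hat hab).symm, ?_⟩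
    have h' : |a.toReal - b.toReal| ≤ d := by exact_mod_cast hd
    have hbs : b.toReal = s := by rw [hb]; exact EReal.toReal_coe s
    rwa [hbs] at h'

lemma lorDiff_le_distortion {X : Type v} {Y : Type u} {ℓX : X → X → EReal}
    {ρ : Y → Y → EReal} {R : Set (X × Y)} {p q : X × Y} (hp : p ∈ R) (hq : q ∈ R) :
    lorDiff (ℓX p.1 q.1) (ρ p.2 q.2) ≤ distortion ℓX ρ R := by
  unfold distortion
  refine le_trans ?_
    (le_iSup₂ (f := fun p (_ : p ∈ R) => ⨆ q ∈ R, lorDiff (ℓX p.1 q.1) (ρ p.2 q.2)) p hp)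
  exact le_iSup₂ (f := fun q (_ : q ∈ R) => lorDiff (ℓX p.1 q.1) (ρ p.2 q.2)) q hq

lemma distortion_le {X : Type v} {Y : Type u} {ℓX : X → X → EReal}
    {ρ : Y → Y → EReal} {R : Set (X × Y)} {c : EReal}
    (h : ∀ p ∈ R, ∀ q ∈ R, lorDiff (ℓX p.1 q.1) (ρ p.2 q.2) ≤ c) :
    distortion ℓX ρ R ≤ c :=
  iSup₂_le fun p hp => iSup₂_le fun q hq => h p hp q hq

lemma mem_netVerts {X : Type v} {S : Finset (X × X)} {x : X} :
    x ∈ netVerts S ↔ ∃ pq ∈ S, pq.1 = x ∨ pq.2 = x := Iff.rfl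

lemma netVerts_image_map {X : Type v} {Y : Type w} [DecidableEq (Y × Y)] (f : X → Y)
    (S : Finset (X × X)) :
    netVerts (S.image (Prod.map f f)) = f '' netVerts S := by
  ext y; constructor
  · rintro ⟨pq, hpq, h⟩
    obtain ⟨ab, hab, rfl⟩ := Finset.mem_image.mp hpq
    rcases h with h | h
    · exact ⟨ab.1, ⟨ab, hab, Or.inl rfl⟩, h⟩
    · exact ⟨ab.2, ⟨ab, hab, Or.inr rfl⟩, h⟩
  · rintro ⟨x, ⟨ab, hab, h⟩, rfl⟩
    refine ⟨Prod.map f f ab, Finset.mem_image_of_mem _ hab, ?_⟩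
    rcases h with h | h
    · exact Or.inl (by rw [← h]; rfl)
    · exact Or.inr (by rw [← h]; rfl)

lemma mem_lorGraphOn {α : Type v} {β : Type u} {f : α → β} {A : Set α} {p : α × β} :
    p ∈ lorGraphOn f A ↔ p.1 ∈ A ∧ f p.1 = p.2 := by
  constructor
  · rintro ⟨x, hx, rfl⟩; exact ⟨hx, rfl⟩
  · rintro ⟨h1, h2⟩
    refine ⟨p.1, h1, ?_⟩
    show (p.1, f p.1) = p
    rw [h2]

lemma lorQuotSep_mk {X : Type v} (ℓ : X → X → EReal) (a b : X) :
    lorQuotSep ℓ (Quotient.mk (lorSetoid ℓ) a) (Quotient.mk (lorSetoid ℓ) b) = ℓ a b := rfl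

lemma quot_mk_out {X : Type v} (ℓ : X → X → EReal) (c : Quotient (lorSetoid ℓ)) :
    Quotient.mk (lorSetoid ℓ) (Quotient.out c) = c := Quotient.out_eq c

lemma lorQuotSep_out {X : Type v} (ℓ : X → X → EReal) (c d : Quotient (lorSetoid ℓ)) :
    lorQuotSep ℓ c d = ℓ (Quotient.out c) (Quotient.out d) := by
  conv_lhs => rw [← quot_mk_out ℓ c, ← quot_mk_out ℓ d]
  rfl

lemma lorQuotSep_out_mk {X : Type v} (ℓ : X → X → EReal) (c : Quotient (lorSetoid ℓ)) (x : X) :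
    lorQuotSep ℓ c (Quotient.mk (lorSetoid ℓ) x) = ℓ (Quotient.out c) x := by
  conv_lhs => rw [← quot_mk_out ℓ c]
  rfl

lemma lorQuotSep_mk_out {X : Type v} (ℓ : X → X → EReal) (x : X) (c : Quotient (lorSetoid ℓ)) :
    lorQuotSep ℓ (Quotient.mk (lorSetoid ℓ) x) c = ℓ x (Quotient.out c) := by
  conv_lhs => rw [← quot_mk_out ℓ c]
  rfl

lemma IsCoveredLPLS.ll_self {X : Type v} {tX : TopologicalSpace X} {ℓ : X → X → EReal}
    {o : X} {U : ℕ → Set X} (h : IsCoveredLPLS tX ℓ o U) (x : X) : ℓ x x = 0 := by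
  obtain ⟨k, hk⟩ : ∃ k, x ∈ U k := by
    have hx : x ∈ ⋃ k, U k := by rw [h.iUnion_eq]; trivial
    simpa using hx
  obtain ⟨T, hT⟩ := h.tau_bdd k
  have h1 : lorTau ℓ x x ≤ (T : EReal) := hT x hk x hk
  have h2 : ℓ x x + ℓ x x ≤ ℓ x x := h.lpls.revTriangle x x x
  have h3 : (0 : EReal) ≤ ℓ x x := h.lpls.refl_nonneg x
  have htop : ℓ x x ≠ ⊤ := by
    intro he
    simp only [lorTau, he] at h1
    simp at h1
  have hbot : ℓ x x ≠ ⊥ := by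
    intro he; rw [he] at h3; simp at h3
  have hr := EReal.coe_toReal htop hbot
  rw [← hr] at h2 h3 ⊢
  rw [← EReal.coe_add] at h2
  have h2' : (ℓ x x).toReal + (ℓ x x).toReal ≤ (ℓ x x).toReal := by exact_mod_cast h2
  have h3' : (0:ℝ) ≤ (ℓ x x).toReal := by exact_mod_cast h3
  have hz : (ℓ x x).toReal = 0 := by linarith
  rw [hz]
  exact EReal.coe_zero

lemma IsLorNet.mono_eps {X : Type v} {ℓ : X → X → EReal} {ε ε' : ℝ} {A : Set X}
    {S : Finset (X × X)} (h : IsLorNet ℓ ε A S) (hee : ε ≤ ε') : IsLorNet ℓ ε' A S :=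
  ⟨fun pq hpq => le_trans (h.1 pq hpq) (by exact_mod_cast hee), h.2⟩

lemma isLorNet_quot_pull {X : Type v} {ℓ : X → X → EReal} {ε : ℝ} {A : Set X}
    [DecidableEq (X × X)]
    {Sq : Finset (Quotient (lorSetoid ℓ) × Quotient (lorSetoid ℓ))}
    (h : IsLorNet (lorQuotSep ℓ) ε (Quotient.mk (lorSetoid ℓ) '' A) Sq) :
    IsLorNet ℓ ε A (Sq.image (Prod.map Quotient.out Quotient.out)) := by
  constructor
  · intro pq hpq
    obtain ⟨cd, hcd, rfl⟩ := Finset.mem_image.mp hpq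
    have h1 := h.1 cd hcd
    simp only [lorTau, lorQuotSep_out] at h1
    exact h1
  · intro x hx
    have hmx : Quotient.mk (lorSetoid ℓ) x ∈ Quotient.mk (lorSetoid ℓ) '' A := ⟨x, hx, rfl⟩
    have h2 := h.2 hmx
    simp only [Set.mem_iUnion] at h2 ⊢
    obtain ⟨cd, hcd, hJ⟩ := h2
    refine ⟨Prod.map Quotient.out Quotient.out cd, Finset.mem_image_of_mem _ hcd, ?_, ?_⟩
    · have := hJ.1
      rwa [causal, lorQuotSep_out_mk] at this
    · have := hJ.2
      rwa [causal, lorQuotSep_mk_out] at this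

end Aux
section Aux2

lemma netVerts_out_image {X : Type v} {ℓ : X → X → EReal} [DecidableEq (X × X)]
    (Sq : Finset (Quotient (lorSetoid ℓ) × Quotient (lorSetoid ℓ))) :
    netVerts (Sq.image (Prod.map Quotient.out Quotient.out))
      = Quotient.out '' netVerts Sq :=
  netVerts_image_map _ _

lemma mapDistortion_comp_eq {α β : Type v} {Y : Type u} (e : α → β)
    (ℓa : α → α → EReal) (ℓb : β → β → EReal) (ρ : Y → Y → EReal) (g : β → Y) (V : Set α)
    (he : ∀ c d, ℓa c d = ℓb (e c) (e d)) :
    mapDistortion ℓa ρ (fun c => g (e c)) V = mapDistortion ℓb ρ g (e '' V) := by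
  apply le_antisymm
  · apply distortion_le
    intro p hp q hq
    rw [mem_lorGraphOn] at hp hq
    obtain ⟨hp1, hp2⟩ := hp
    obtain ⟨hq1, hq2⟩ := hq
    rw [← hp2, ← hq2, he p.1 q.1]
    exact lorDiff_le_distortion (p := (e p.1, g (e p.1))) (q := (e q.1, g (e q.1)))
      ⟨e p.1, ⟨p.1, hp1, rfl⟩, rfl⟩ ⟨e q.1, ⟨q.1, hq1, rfl⟩, rfl⟩
  · apply distortion_le
    intro p hp q hq
    rw [mem_lorGraphOn] at hp hq
    obtain ⟨hp1, hp2⟩ := hp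
    obtain ⟨hq1, hq2⟩ := hq
    obtain ⟨c, hc, hec⟩ := hp1
    obtain ⟨d, hd, hed⟩ := hq1
    rw [← hp2, ← hq2, ← hec, ← hed, ← he c d]
    exact lorDiff_le_distortion (p := (c, g (e c))) (q := (d, g (e d)))
      ⟨c, hc, rfl⟩ ⟨d, hd, rfl⟩

lemma LGHFwdDense_quotient {X : Type v} {tX : TopologicalSpace X} {ℓ : X → X → EReal}
    {A : Set X} (P : EReal → Prop)
    (h : LGHFwdDenseWith tX ℓ (fun x y => P (ℓ x y)) A) :
    LGHFwdDenseWith (lorQuotTop tX ℓ) (lorQuotSep ℓ)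
      (fun c d => P (lorQuotSep ℓ c d)) (Quotient.mk (lorSetoid ℓ) '' A) := by
  classical
  intro Sq hSq x hx
  obtain ⟨hxA, hxV⟩ := hx
  obtain ⟨a, haA, hax⟩ := hxA
  have hS : ∀ l : ℕ, 1 ≤ l → IsLorNet ℓ (1 / (l:ℝ)) A
      ((Sq l).image (Prod.map Quotient.out Quotient.out)) :=
    fun l hl => isLorNet_quot_pull (hSq l hl)
  have haV : a ∉ ⋃ l ∈ {l : ℕ | 1 ≤ l},
      netVerts ((Sq l).image (Prod.map Quotient.out Quotient.out)) := by
    intro hmem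
    apply hxV
    simp only [Set.mem_iUnion] at hmem ⊢
    obtain ⟨l, hl, hal⟩ := hmem
    rw [netVerts_out_image] at hal
    obtain ⟨c, hc, hca⟩ := hal
    refine ⟨l, hl, ?_⟩
    rw [← hax, ← hca, quot_mk_out]
    exact hc
  obtain ⟨u, hu1, hu2, hu3, hu4⟩ := h _ hS a ⟨haA, haV⟩
  refine ⟨fun k => Quotient.mk (lorSetoid ℓ) (u k), ?_, ?_, ?_, ?_⟩
  · intro k
    have hk := hu1 k
    simp only [Set.mem_iUnion] at hk ⊢
    obtain ⟨l, hl, hal⟩ := hk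
    rw [netVerts_out_image] at hal
    obtain ⟨c, hc, hca⟩ := hal
    refine ⟨l, hl, ?_⟩
    rw [← hca, quot_mk_out]
    exact hc
  · intro k
    exact hu2 k
  · intro k
    rw [← hax]
    exact hu3 k
  · rw [← hax]
    have hcont : @Continuous X (Quotient (lorSetoid ℓ)) tX (lorQuotTop tX ℓ)
        (Quotient.mk (lorSetoid ℓ)) := continuous_coinduced_rng
    exact (hcont.tendsto a).comp hu4

lemma LGHExtension_quotient {Xn : ℕ → Type u} {ℓn : ∀ n, Xn n → Xn n → EReal}
    {An : ∀ n, Set (Xn n)} {X : Type v} {ℓ : X → X → EReal} {A : Set X}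
    (h : LGHExtension ℓn An ℓ A) :
    LGHExtension ℓn An (lorQuotSep ℓ) (Quotient.mk (lorSetoid ℓ) '' A) := by
  classical
  intro l hl Sq Sq' hSq hSq' Tn Tn' hTn hTn' fq hfq n
  have houtS : netVerts (Sq.image (Prod.map Quotient.out Quotient.out))
      = Quotient.out '' netVerts Sq := netVerts_out_image Sq
  have houtS' : netVerts (Sq'.image (Prod.map Quotient.out Quotient.out))
      = Quotient.out '' netVerts Sq' := netVerts_out_image Sq'
  have hf : ∀ m, RealizesCorresp (fun x => fq m (Quotient.mk (lorSetoid ℓ) x))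
      (netVerts (Sq.image (Prod.map Quotient.out Quotient.out))) (netVerts (Tn m)) := by
    intro m
    obtain ⟨hmem, hs1, hs2⟩ := hfq m
    have hval : ∀ x ∈ netVerts (Sq.image (Prod.map Quotient.out Quotient.out)),
        fq m (Quotient.mk (lorSetoid ℓ) x) ∈ netVerts (Tn m) := by
      intro x hx
      rw [houtS] at hx
      obtain ⟨c, hc, rfl⟩ := hx
      rw [quot_mk_out]
      exact (hmem _ ⟨c, hc, rfl⟩).2
    refine ⟨?_, ?_, ?_⟩
    · rintro p ⟨x, hx, rfl⟩
      exact ⟨hx, hval x hx⟩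
    · intro x hx
      exact ⟨fq m (Quotient.mk (lorSetoid ℓ) x), hval x hx, ⟨x, hx, rfl⟩⟩
    · intro b hb
      obtain ⟨c, hcV, hcb⟩ := hs2 b hb
      rw [mem_lorGraphOn] at hcb
      obtain ⟨hc1, hc2⟩ := hcb
      refine ⟨Quotient.out c, by rw [houtS]; exact ⟨c, hc1, rfl⟩, ?_⟩
      rw [mem_lorGraphOn]
      refine ⟨by rw [houtS]; exact ⟨c, hc1, rfl⟩, ?_⟩
      show fq m (Quotient.mk (lorSetoid ℓ) (Quotient.out c)) = b
      rw [quot_mk_out]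
      exact hc2
  obtain ⟨n', hn', g, hg1, hg2, hg3⟩ := h l hl _ _ (isLorNet_quot_pull hSq)
    (isLorNet_quot_pull hSq') Tn Tn' hTn hTn'
    (fun m x => fq m (Quotient.mk (lorSetoid ℓ) x)) hf n
  refine ⟨n', hn', fun c => g (Quotient.out c), ?_, ?_, ?_⟩
  · intro c hc
    have hoc : Quotient.out c ∈ netVerts (Sq.image (Prod.map Quotient.out Quotient.out)) := by
      rw [houtS]; exact ⟨c, hc, rfl⟩
    show g (Quotient.out c) = fq n' c
    rw [hg1 _ hoc]
    show fq n' (Quotient.mk (lorSetoid ℓ) (Quotient.out c)) = fq n' c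
    rw [quot_mk_out]
  · obtain ⟨hmem, hs1, hs2⟩ := hg2
    have hout : ∀ c, c ∈ netVerts Sq ∪ netVerts Sq' → Quotient.out c ∈
        netVerts (Sq.image (Prod.map Quotient.out Quotient.out))
        ∪ netVerts (Sq'.image (Prod.map Quotient.out Quotient.out)) := by
      intro c hc
      rcases hc with hc | hc
      · exact Or.inl (by rw [houtS]; exact ⟨c, hc, rfl⟩)
      · exact Or.inr (by rw [houtS']; exact ⟨c, hc, rfl⟩)
    refine ⟨?_, ?_, ?_⟩
    · rintro p ⟨c, hc, rfl⟩
      exact ⟨hc, (hmem _ ⟨Quotient.out c, hout c hc, rfl⟩).2⟩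
    · intro c hc
      exact ⟨g (Quotient.out c), (hmem _ ⟨Quotient.out c, hout c hc, rfl⟩).2, ⟨c, hc, rfl⟩⟩
    · intro b hb
      obtain ⟨x, hxU, hxb⟩ := hs2 b hb
      rw [mem_lorGraphOn] at hxb
      obtain ⟨hx1, hx2⟩ := hxb
      have hex : ∃ c, (c ∈ netVerts Sq ∪ netVerts Sq') ∧ Quotient.out c = x := by
        rcases hx1 with hx | hx
        · rw [houtS] at hx; obtain ⟨c, hc, hcx⟩ := hx; exact ⟨c, Or.inl hc, hcx⟩
        · rw [houtS'] at hx; obtain ⟨c, hc, hcx⟩ := hx; exact ⟨c, Or.inr hc, hcx⟩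
      obtain ⟨c, hcU, hcx⟩ := hex
      refine ⟨c, hcU, ?_⟩
      rw [mem_lorGraphOn]
      refine ⟨hcU, ?_⟩
      show g (Quotient.out c) = b
      rw [hcx]
      exact hx2
  · have e1 := mapDistortion_comp_eq (Quotient.out)
      (lorQuotSep ℓ) ℓ (ℓn n') g (netVerts Sq ∪ netVerts Sq') (lorQuotSep_out ℓ)
    have e2 := mapDistortion_comp_eq (Quotient.out)
      (lorQuotSep ℓ) ℓ (ℓn n') (fun x => fq n' (Quotient.mk (lorSetoid ℓ) x))
      (netVerts Sq) (lorQuotSep_out ℓ)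
    rw [show (fun c => (fun x => fq n' (Quotient.mk (lorSetoid ℓ) x)) (Quotient.out c)) = fq n'
      from funext fun c => by simp only [quot_mk_out]] at e2
    rw [e1, e2, Set.image_union, ← houtS, ← houtS']
    exact hg3

end Aux2
section Aux3

lemma per_n_construction {Y : Type u} {X : Type v} (ℓY : Y → Y → EReal) (ℓ : X → X → EReal)
    (AY : Set Y) (SY : Finset (Y × Y)) (S : Finset (X × X)) (R : Set (Y × X))
    (C : Finset (Quotient (lorSetoid ℓ)))
    (Cstar : Finset (Quotient (lorSetoid ℓ) × Quotient (lorSetoid ℓ)))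
    (Qnet : Finset (Quotient (lorSetoid ℓ) × Quotient (lorSetoid ℓ)))
    (ε : ℝ) (hε : 0 < ε)
    (hzn : ∀ y, ℓY y y = 0)
    (hbotn : ∀ x y, ℓY x y = ⊥ ∨ 0 ≤ ℓY x y)
    (htrin : ∀ x y z, ℓY x y + ℓY y z ≤ ℓY x z)
    (hz : ∀ x : X, ℓ x x = 0)
    (hC : ∀ c, c ∈ C ↔ ∃ v ∈ netVerts S, Quotient.mk (lorSetoid ℓ) v = c)
    (hCstar : ∀ cd : Quotient (lorSetoid ℓ) × Quotient (lorSetoid ℓ),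
      cd ∈ Cstar ↔ cd.1 ∈ C ∧ cd.2 ∈ C ∧
        lorTau (lorQuotSep ℓ) cd.1 cd.2 ≤ ((ε/2 : ℝ) : EReal))
    (hQnetV : netVerts Qnet = (↑C : Set (Quotient (lorSetoid ℓ))))
    (hnet : IsLorNet ℓY (ε/4) AY SY)
    (hcard : SY.card = S.card)
    (hcorr : IsCorresp R (netVerts SY) (netVerts S))
    (hdis : distortion ℓY ℓ R ≤ ((ε/4 : ℝ) : EReal))
    (hSne : S.Nonempty) :
    ∃ (B : Finset (Y × Y)) (R' : Set (Y × Quotient (lorSetoid ℓ))),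
      IsLorNet ℓY ε AY B ∧ B.card = min S.card Cstar.card ∧
      IsCorresp R' (netVerts B) (netVerts Qnet) ∧
      distortion ℓY (lorQuotSep ℓ) R' ≤ distortion ℓY ℓ R ∧
      0 ≤ distortion ℓY (lorQuotSep ℓ) R' := by
  classical
  have hSYne : SY.Nonempty := by
    rw [← Finset.card_pos, hcard, Finset.card_pos]; exact hSne
  obtain ⟨k₀, hk₀⟩ := hSYne
  obtain ⟨pq₀, hpq₀⟩ := hSne
  -- partner choices
  have hPhi : ∀ a : Y, ∃ v : X, a ∈ netVerts SY → ((a, v) ∈ R ∧ v ∈ netVerts S) := by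
    intro a
    by_cases ha : a ∈ netVerts SY
    · obtain ⟨v, hv1, hv2⟩ := hcorr.2.1 a ha
      exact ⟨v, fun _ => ⟨hv2, hv1⟩⟩
    · exact ⟨pq₀.1, fun h' => absurd h' ha⟩
  choose Φ hΦ using hPhi
  have hPsi : ∀ v : X, ∃ a : Y, v ∈ netVerts S → ((a, v) ∈ R ∧ a ∈ netVerts SY) := by
    intro v
    by_cases hv : v ∈ netVerts S
    · obtain ⟨a, ha1, ha2⟩ := hcorr.2.2 v hv
      exact ⟨a, fun _ => ⟨ha2, ha1⟩⟩
    · exact ⟨k₀.1, fun h' => absurd h' hv⟩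
  choose Ψ hΨ using hPsi
  have hsig : ∀ c : Quotient (lorSetoid ℓ), ∃ v : X, c ∈ C →
      (v ∈ netVerts S ∧ Quotient.mk (lorSetoid ℓ) v = c) := by
    intro c
    by_cases hc : c ∈ C
    · obtain ⟨v, hv1, hv2⟩ := (hC c).mp hc
      exact ⟨v, fun _ => ⟨hv1, hv2⟩⟩
    · exact ⟨pq₀.1, fun h' => absurd h' hc⟩
  choose σ hσ using hsig
  have hvert1 : ∀ k : Y × Y, k ∈ SY → k.1 ∈ netVerts SY := fun k hk => ⟨k, hk, Or.inl rfl⟩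
  have hvert2 : ∀ k : Y × Y, k ∈ SY → k.2 ∈ netVerts SY := fun k hk => ⟨k, hk, Or.inr rfl⟩
  have hkey : ∀ a a' : Y, a ∈ netVerts SY → a' ∈ netVerts SY →
      lorDiff (ℓY a a') (ℓ (Φ a) (Φ a')) ≤ ((ε/4 : ℝ) : EReal) := by
    intro a a' ha ha'
    exact le_trans (lorDiff_le_distortion (p := (a, Φ a)) (q := (a', Φ a'))
      ((hΦ a ha).1) ((hΦ a' ha').1)) hdis
  have hzero : ∀ a a' : Y, a ∈ netVerts SY → a' ∈ netVerts SY →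
      ℓ (Φ a) (Φ a') = 0 → 0 ≤ ℓY a a' := by
    intro a a' ha ha' h0
    obtain ⟨r, hr1, hr2⟩ := lorDiff_le_coe (s := 0)
      (by rw [h0]; exact EReal.coe_zero.symm) (hkey a a' ha ha')
    rcases hbotn a a' with hb | hb
    · rw [hb] at hr1; exact absurd hr1.symm (EReal.coe_ne_bot r)
    · exact hb
  -- domination
  have hdom : ∀ k k' : Y × Y, k ∈ SY → k' ∈ SY →
      Quotient.mk (lorSetoid ℓ) (Φ k.1) = Quotient.mk (lorSetoid ℓ) (Φ k'.1) →
      Quotient.mk (lorSetoid ℓ) (Φ k.2) = Quotient.mk (lorSetoid ℓ) (Φ k'.2) →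
      ∀ x, x ∈ diamondJ ℓY k'.1 k'.2 → x ∈ diamondJ ℓY k.1 k.2 := by
    intro k k' hk hk' h1 h2 x hx
    have e1 : ℓ (Φ k.1) (Φ k'.1) = 0 := by
      have hr1 := Quotient.exact h1
      have := (hr1 (Φ k'.1)).1
      rw [this]; exact hz _
    have e2 : ℓ (Φ k'.2) (Φ k.2) = 0 := by
      have hr2 := Quotient.exact h2
      have := (hr2 (Φ k.2)).1
      rw [← this]; exact hz _
    have d1 : (0:EReal) ≤ ℓY k.1 k'.1 := hzero _ _ (hvert1 k hk) (hvert1 k' hk') e1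
    have d2 : (0:EReal) ≤ ℓY k'.2 k.2 := hzero _ _ (hvert2 k' hk') (hvert2 k hk) e2
    constructor
    · exact le_trans (add_nonneg d1 hx.1) (htrin k.1 k'.1 x)
    · exact le_trans (add_nonneg hx.2 d2) (htrin x k'.2 k.2)
  -- the essential subfamily
  set G : Y × Y → Quotient (lorSetoid ℓ) × Quotient (lorSetoid ℓ) :=
    fun k => (Quotient.mk (lorSetoid ℓ) (Φ k.1), Quotient.mk (lorSetoid ℓ) (Φ k.2)) with hG
  set NE : Finset (Y × Y) := SY.filter (fun k => ∃ x ∈ AY, x ∈ diamondJ ℓY k.1 k.2) with hNE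
  have hrex : ∀ cd : Quotient (lorSetoid ℓ) × Quotient (lorSetoid ℓ), ∃ k : Y × Y,
      cd ∈ NE.image G → (k ∈ NE ∧ G k = cd) := by
    intro cd
    by_cases hcd : cd ∈ NE.image G
    · obtain ⟨k, hk, hGk⟩ := Finset.mem_image.mp hcd
      exact ⟨k, fun _ => ⟨hk, hGk⟩⟩
    · exact ⟨k₀, fun h' => absurd h' hcd⟩
  choose rG hrG using hrex
  set K : Finset (Y × Y) := (NE.image G).image rG with hK
  have hNEsub : NE ⊆ SY := Finset.filter_subset _ _
  have hKsub : K ⊆ SY := by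
    intro k hk
    rw [hK] at hk
    obtain ⟨cd, hcd, rfl⟩ := Finset.mem_image.mp hk
    exact hNEsub ((hrG cd hcd).1)
  have hKcover : ∀ x ∈ AY, ∃ k ∈ K, x ∈ diamondJ ℓY k.1 k.2 := by
    intro x hx
    have hcov := hnet.2 hx
    simp only [Set.mem_iUnion] at hcov
    obtain ⟨k, hk, hxk⟩ := hcov
    have hkNE : k ∈ NE := by
      rw [hNE, Finset.mem_filter]
      exact ⟨hk, x, hx, hxk⟩
    have hGk : G k ∈ NE.image G := Finset.mem_image_of_mem _ hkNE
    obtain ⟨hrNE, hrGe⟩ := hrG (G k) hGk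
    refine ⟨rG (G k), by rw [hK]; exact Finset.mem_image_of_mem _ hGk, ?_⟩
    exact hdom (rG (G k)) k (hNEsub hrNE) hk
      (congrArg Prod.fst hrGe) (congrArg Prod.snd hrGe) x hxk
  have hNEval : ∀ k ∈ NE, (0:EReal) ≤ ℓY k.1 k.2 ∧ ℓY k.1 k.2 ≤ ((ε/4:ℝ) : EReal) := by
    intro k hk
    rw [hNE, Finset.mem_filter] at hk
    obtain ⟨hkS, hex⟩ := hk
    obtain ⟨x, hxA, hxJ⟩ := hex
    constructor
    · exact le_trans (add_nonneg hxJ.1 hxJ.2) (htrin k.1 x k.2)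
    · exact le_trans (le_max_right _ _) (hnet.1 k hkS)
  have hGCstar : ∀ k ∈ NE, G k ∈ Cstar := by
    intro k hk
    have hkS : k ∈ SY := hNEsub hk
    obtain ⟨hge0, hle⟩ := hNEval k hk
    have hnb : ℓY k.1 k.2 ≠ ⊥ := by
      intro hb; rw [hb] at hge0; simp at hge0
    have hnt : ℓY k.1 k.2 ≠ ⊤ := by
      intro ht; rw [ht] at hle
      exact absurd (top_le_iff.mp hle) (EReal.coe_ne_top _)
    have hcoe : ℓY k.1 k.2 = (((ℓY k.1 k.2).toReal : ℝ) : EReal) := (EReal.coe_toReal hnt hnb).symm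
    have hs0 : (0:ℝ) ≤ (ℓY k.1 k.2).toReal := by
      rw [hcoe] at hge0; exact_mod_cast hge0
    have hs4 : (ℓY k.1 k.2).toReal ≤ ε/4 := by
      rw [hcoe] at hle; exact_mod_cast hle
    have hd : lorDiff (ℓ (Φ k.1) (Φ k.2)) (ℓY k.1 k.2) ≤ ((ε/4:ℝ):EReal) := by
      rw [lorDiff_comm]; exact hkey k.1 k.2 (hvert1 k hkS) (hvert2 k hkS)
    obtain ⟨t, ht1, ht2⟩ := lorDiff_le_coe hcoe hd
    have htle : t ≤ ε/2 := by
      have habs := abs_le.mp ht2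
      linarith [habs.2]
    rw [hCstar]
    refine ⟨?_, ?_, ?_⟩
    · rw [hC]; exact ⟨Φ k.1, (hΦ k.1 (hvert1 k hkS)).2, rfl⟩
    · rw [hC]; exact ⟨Φ k.2, (hΦ k.2 (hvert2 k hkS)).2, rfl⟩
    · have heq : lorTau (lorQuotSep ℓ) (G k).1 (G k).2 = max 0 ((t : ℝ) : EReal) := by
        show max 0 (lorQuotSep ℓ (Quotient.mk (lorSetoid ℓ) (Φ k.1))
          (Quotient.mk (lorSetoid ℓ) (Φ k.2))) = _
        rw [lorQuotSep_mk, ht1]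
      show lorTau (lorQuotSep ℓ) (G k).1 (G k).2 ≤ ((ε/2:ℝ) : EReal)
      rw [heq]
      apply max_le
      · exact_mod_cast (by linarith : (0:ℝ) ≤ ε/2)
      · exact_mod_cast htle
  have hdiag : ∀ c ∈ C, (c, c) ∈ Cstar := by
    intro c hc
    rw [hCstar]
    refine ⟨hc, hc, ?_⟩
    obtain ⟨v, hv1, hv2⟩ := (hC c).mp hc
    show lorTau (lorQuotSep ℓ) c c ≤ ((ε/2:ℝ) : EReal)
    rw [← hv2]
    show max 0 (lorQuotSep ℓ (Quotient.mk (lorSetoid ℓ) v) (Quotient.mk (lorSetoid ℓ) v)) ≤ _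
    rw [lorQuotSep_mk, hz v, max_self]
    exact_mod_cast (by linarith : (0:ℝ) ≤ ε/2)
  -- missing classes and the diagonal filler
  set VK : Finset Y := K.image Prod.fst ∪ K.image Prod.snd with hVK
  set Ccov : Finset (Quotient (lorSetoid ℓ)) :=
    VK.image (fun a => Quotient.mk (lorSetoid ℓ) (Φ a)) with hCcov
  set miss : Finset (Quotient (lorSetoid ℓ)) := C \ Ccov with hmiss
  set W : Finset (Y × Y) := miss.image (fun c => (Ψ (σ c), Ψ (σ c))) with hW
  have hdisjKW : Disjoint (NE.image G) (miss.image (fun c => (c, c))) := by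
    rw [Finset.disjoint_left]
    intro cd hcd1 hcd2
    obtain ⟨c, hcmiss, hceq⟩ := Finset.mem_image.mp hcd2
    obtain ⟨k, hkNE, hGk⟩ := Finset.mem_image.mp hcd1
    have hrk := hrG (G k) (Finset.mem_image_of_mem _ hkNE)
    have hmem1 : (rG (G k)).1 ∈ VK := by
      rw [hVK]
      refine Finset.mem_union_left _ (Finset.mem_image_of_mem _ ?_)
      rw [hK]
      exact Finset.mem_image_of_mem _ (Finset.mem_image_of_mem _ hkNE)
    have hcov : Quotient.mk (lorSetoid ℓ) (Φ (rG (G k)).1) ∈ Ccov := by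
      rw [hCcov]; exact Finset.mem_image_of_mem _ hmem1
    have h3 : Quotient.mk (lorSetoid ℓ) (Φ (rG (G k)).1) = c := by
      show (G (rG (G k))).1 = c
      rw [hrk.2, hGk, ← hceq]
    rw [h3] at hcov
    rw [hmiss, Finset.mem_sdiff] at hcmiss
    exact hcmiss.2 hcov
  have hGsub : NE.image G ⊆ Cstar := by
    intro cd hcd
    obtain ⟨k, hk, rfl⟩ := Finset.mem_image.mp hcd
    exact hGCstar k hk
  have hmisssub : miss.image (fun c => (c, c)) ⊆ Cstar := by
    intro cd hcd
    obtain ⟨c, hc, rfl⟩ := Finset.mem_image.mp hcd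
    have hcC : c ∈ C := by
      rw [hmiss, Finset.mem_sdiff] at hc
      exact hc.1
    exact hdiag c hcC
  have hcardKW : (K ∪ W).card ≤ Cstar.card := by
    have h1 : K.card ≤ (NE.image G).card := by
      rw [hK]; exact Finset.card_image_le
    have h2 : W.card ≤ miss.card := by
      rw [hW]; exact Finset.card_image_le
    have h3 : miss.card = (miss.image (fun c => (c, c))).card :=
      (Finset.card_image_of_injective _ (fun a b hab => (Prod.ext_iff.mp hab).1)).symm
    have h4 : (NE.image G).card + miss.card ≤ Cstar.card := by
      rw [h3, ← Finset.card_union_of_disjoint hdisjKW]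
      exact Finset.card_le_card (Finset.union_subset hGsub hmisssub)
    calc (K ∪ W).card ≤ K.card + W.card := Finset.card_union_le _ _
      _ ≤ (NE.image G).card + miss.card := Nat.add_le_add h1 h2
      _ ≤ Cstar.card := h4
  -- main construction of B
  have hmain : ∃ B : Finset (Y × Y),
      (∀ pq ∈ B, lorTau ℓY pq.1 pq.2 ≤ (ε : EReal)) ∧
      (∀ x ∈ AY, ∃ k ∈ B, x ∈ diamondJ ℓY k.1 k.2) ∧
      B.card = min S.card Cstar.card ∧
      (netVerts B ⊆ netVerts SY) ∧
      (∀ c ∈ C, ∃ a ∈ netVerts B, ∃ v, (a, v) ∈ R ∧ Quotient.mk (lorSetoid ℓ) v = c) := by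
    by_cases hcase : S.card ≤ Cstar.card
    · refine ⟨SY, ?_, ?_, ?_, fun a ha => ha, ?_⟩
      · intro pq hpq
        exact le_trans (hnet.1 pq hpq) (by exact_mod_cast (by linarith : ε/4 ≤ ε))
      · intro x hx
        have hcov := hnet.2 hx
        simp only [Set.mem_iUnion] at hcov
        obtain ⟨k, hk, hxk⟩ := hcov
        exact ⟨k, hk, hxk⟩
      · rw [hcard, min_eq_left hcase]
      · intro c hc
        obtain ⟨v, hv1, hv2⟩ := (hC c).mp hc
        exact ⟨Ψ v, (hΨ v hv1).2, v, (hΨ v hv1).1, hv2⟩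
    · push_neg at hcase
      have hM : min S.card Cstar.card = Cstar.card := min_eq_right (le_of_lt hcase)
      have hsub : K ∪ W ⊆ (K ∪ W) ∪ SY := Finset.subset_union_left
      have hcard2 : Cstar.card ≤ ((K ∪ W) ∪ SY).card := by
        calc Cstar.card ≤ S.card := le_of_lt hcase
          _ = SY.card := hcard.symm
          _ ≤ ((K ∪ W) ∪ SY).card := Finset.card_le_card Finset.subset_union_right
      obtain ⟨B, hB1, hB2, hB3⟩ := Finset.exists_subsuperset_card_eq hsub hcardKW hcard2
      have hBsub : B ⊆ SY ∪ W := by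
        intro pq hpq
        rcases Finset.mem_union.mp (hB2 hpq) with h | h
        · rcases Finset.mem_union.mp h with h' | h'
          · exact Finset.mem_union_left _ (hKsub h')
          · exact Finset.mem_union_right _ h'
        · exact Finset.mem_union_left _ h
      refine ⟨B, ?_, ?_, ?_, ?_, ?_⟩
      · intro pq hpq
        rcases Finset.mem_union.mp (hBsub hpq) with h | h
        · exact le_trans (hnet.1 pq h) (by exact_mod_cast (by linarith : ε/4 ≤ ε))
        · rw [hW] at h
          obtain ⟨c, hcm, rfl⟩ := Finset.mem_image.mp h
          show lorTau ℓY (Ψ (σ c)) (Ψ (σ c)) ≤ (ε : EReal)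
          show max 0 (ℓY (Ψ (σ c)) (Ψ (σ c))) ≤ (ε : EReal)
          rw [hzn, max_self]
          exact_mod_cast le_of_lt hε
      · intro x hx
        obtain ⟨k, hkK, hxk⟩ := hKcover x hx
        exact ⟨k, hB1 (Finset.mem_union_left _ hkK), hxk⟩
      · rw [hB3, hM]
      · intro a ha
        obtain ⟨pq, hpq, hcomp⟩ := ha
        rcases Finset.mem_union.mp (hBsub hpq) with h | h
        · rcases hcomp with h1 | h1
          · rw [← h1]; exact hvert1 pq h
          · rw [← h1]; exact hvert2 pq h
        · rw [hW] at h
          obtain ⟨c, hcm, hpq2⟩ := Finset.mem_image.mp h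
          have hcC : c ∈ C := by
            rw [hmiss, Finset.mem_sdiff] at hcm
            exact hcm.1
          have hmemΨ : Ψ (σ c) ∈ netVerts SY := (hΨ (σ c) (hσ c hcC).1).2
          rcases hcomp with h1 | h1
          · rw [← h1, ← hpq2]; exact hmemΨ
          · rw [← h1, ← hpq2]; exact hmemΨ
      · intro c hc
        by_cases hccov : c ∈ Ccov
        · rw [hCcov] at hccov
          obtain ⟨a, haVK, hac⟩ := Finset.mem_image.mp hccov
          have haK : ∃ k ∈ K, k.1 = a ∨ k.2 = a := by
            rw [hVK] at haVK
            rcases Finset.mem_union.mp haVK with h | h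
            · obtain ⟨k, hk, rfl⟩ := Finset.mem_image.mp h
              exact ⟨k, hk, Or.inl rfl⟩
            · obtain ⟨k, hk, rfl⟩ := Finset.mem_image.mp h
              exact ⟨k, hk, Or.inr rfl⟩
          obtain ⟨k, hkK, hcomp⟩ := haK
          have haB : a ∈ netVerts B := ⟨k, hB1 (Finset.mem_union_left _ hkK), hcomp⟩
          have haSY : a ∈ netVerts SY := ⟨k, hKsub hkK, hcomp⟩
          exact ⟨a, haB, Φ a, (hΦ a haSY).1, hac⟩
        · have hcm : c ∈ miss := by
            rw [hmiss]; exact Finset.mem_sdiff.mpr ⟨hc, hccov⟩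
          have hwmem : (Ψ (σ c), Ψ (σ c)) ∈ W := by
            rw [hW]; exact Finset.mem_image_of_mem _ hcm
          have hwB : (Ψ (σ c), Ψ (σ c)) ∈ B := hB1 (Finset.mem_union_right _ hwmem)
          exact ⟨Ψ (σ c), ⟨_, hwB, Or.inl rfl⟩, σ c, (hΨ (σ c) (hσ c hc).1).1, (hσ c hc).2⟩
  obtain ⟨B, hBτ, hBcov, hBcard, hBV, hBsurj⟩ := hmain
  refine ⟨B, {p : Y × Quotient (lorSetoid ℓ) | p.1 ∈ netVerts B ∧
      ∃ v, (p.1, v) ∈ R ∧ Quotient.mk (lorSetoid ℓ) v = p.2}, ⟨hBτ, ?_⟩, hBcard, ?_, ?_, ?_⟩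
  · intro x hx
    obtain ⟨k, hk, hxk⟩ := hBcov x hx
    exact Set.mem_iUnion₂.mpr ⟨k, hk, hxk⟩
  · refine ⟨?_, ?_, ?_⟩
    · rintro p ⟨hp1, v, hv1, hv2⟩
      refine ⟨hp1, ?_⟩
      rw [hQnetV, ← hv2]
      exact Finset.mem_coe.mpr ((hC _).mpr ⟨v, (hcorr.1 _ hv1).2, rfl⟩)
    · intro a ha
      have haSY : a ∈ netVerts SY := hBV ha
      refine ⟨Quotient.mk (lorSetoid ℓ) (Φ a), ?_, ha, Φ a, (hΦ a haSY).1, rfl⟩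
      rw [hQnetV]
      exact Finset.mem_coe.mpr ((hC _).mpr ⟨Φ a, (hΦ a haSY).2, rfl⟩)
    · intro c hcQ
      have hcC : c ∈ C := Finset.mem_coe.mp (by rw [← hQnetV]; exact hcQ)
      obtain ⟨a, haB, v, hv1, hv2⟩ := hBsurj c hcC
      exact ⟨a, haB, haB, v, hv1, hv2⟩
  · apply distortion_le
    rintro p ⟨hp1, v, hv1, hv2⟩ q ⟨hq1, w, hw1, hw2⟩
    have hval : lorQuotSep ℓ p.2 q.2 = ℓ v w := by
      rw [← hv2, ← hw2, lorQuotSep_mk]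
    rw [hval]
    exact lorDiff_le_distortion (p := (p.1, v)) (q := (q.1, w)) hv1 hw1
  · have hCne : C.Nonempty := by
      refine ⟨Quotient.mk (lorSetoid ℓ) pq₀.1, ?_⟩
      rw [hC]
      exact ⟨pq₀.1, ⟨pq₀, hpq₀, Or.inl rfl⟩, rfl⟩
    obtain ⟨c₀, hc₀⟩ := hCne
    have hCstarne : Cstar.Nonempty := ⟨(c₀, c₀), hdiag c₀ hc₀⟩
    have hBne : B.Nonempty := by
      rw [← Finset.card_pos, hBcard]
      exact lt_min_iff.mpr ⟨Finset.card_pos.mpr ⟨pq₀, hpq₀⟩, Finset.card_pos.mpr hCstarne⟩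
    obtain ⟨k, hk⟩ := hBne
    have hamem : k.1 ∈ netVerts B := ⟨k, hk, Or.inl rfl⟩
    have haSY := hBV hamem
    have hp : (k.1, Quotient.mk (lorSetoid ℓ) (Φ k.1)) ∈
        {p : Y × Quotient (lorSetoid ℓ) | p.1 ∈ netVerts B ∧
          ∃ v, (p.1, v) ∈ R ∧ Quotient.mk (lorSetoid ℓ) v = p.2} :=
      ⟨hamem, Φ k.1, (hΦ _ haSY).1, rfl⟩
    exact le_trans (lorDiff_nonneg _ _)
      (lorDiff_le_distortion (p := (k.1, Quotient.mk (lorSetoid ℓ) (Φ k.1)))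
        (q := (k.1, Quotient.mk (lorSetoid ℓ) (Φ k.1))) hp hp)

end Aux3
section Aux4

lemma LGHNets_quotient {Xn : ℕ → Type u} {ℓn : ∀ n, Xn n → Xn n → EReal}
    {An : ∀ n, Set (Xn n)} {X : Type v} {ℓ : X → X → EReal} {A : Set X}
    (h : LGHNets ℓn An ℓ A) (hA : A.Nonempty) (hz : ∀ x : X, ℓ x x = 0)
    (hzn : ∀ n (y : Xn n), ℓn n y y = 0)
    (hbotn : ∀ n (x y : Xn n), ℓn n x y = ⊥ ∨ 0 ≤ ℓn n x y)
    (htrin : ∀ n (x y z : Xn n), ℓn n x y + ℓn n y z ≤ ℓn n x z) :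
    LGHNets ℓn An (lorQuotSep ℓ) (Quotient.mk (lorSetoid ℓ) '' A) := by
  classical
  intro ε hε
  obtain ⟨n₀, S, Sn, R, hS, hSn, hR⟩ := h (ε/4) (by linarith)
  obtain ⟨a₀, ha₀⟩ := hA
  have hSne : S.Nonempty := by
    have hcov := hS.2 ha₀
    simp only [Set.mem_iUnion] at hcov
    obtain ⟨pq, hpq, -⟩ := hcov
    exact ⟨pq, hpq⟩
  set VS : Finset X := S.image Prod.fst ∪ S.image Prod.snd with hVS
  have hVSiff : ∀ x : X, x ∈ VS ↔ x ∈ netVerts S := by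
    intro x
    rw [hVS]
    simp only [Finset.mem_union, Finset.mem_image]
    constructor
    · rintro (⟨a, ha, rfl⟩ | ⟨a, ha, rfl⟩)
      · exact ⟨a, ha, Or.inl rfl⟩
      · exact ⟨a, ha, Or.inr rfl⟩
    · rintro ⟨a, ha, (rfl | rfl)⟩
      · exact Or.inl ⟨a, ha, rfl⟩
      · exact Or.inr ⟨a, ha, rfl⟩
  set C : Finset (Quotient (lorSetoid ℓ)) := VS.image (Quotient.mk (lorSetoid ℓ)) with hCdef
  have hC : ∀ c, c ∈ C ↔ ∃ v ∈ netVerts S, Quotient.mk (lorSetoid ℓ) v = c := by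
    intro c
    rw [hCdef]
    simp only [Finset.mem_image]
    constructor
    · rintro ⟨v, hv, rfl⟩; exact ⟨v, (hVSiff v).mp hv, rfl⟩
    · rintro ⟨v, hv, rfl⟩; exact ⟨v, (hVSiff v).mpr hv, rfl⟩
  set Cstar : Finset (Quotient (lorSetoid ℓ) × Quotient (lorSetoid ℓ)) := (C ×ˢ C).filter
      (fun cd => lorTau (lorQuotSep ℓ) cd.1 cd.2 ≤ ((ε/2 : ℝ) : EReal)) with hCstardef
  have hCstar : ∀ cd : Quotient (lorSetoid ℓ) × Quotient (lorSetoid ℓ),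
      cd ∈ Cstar ↔ cd.1 ∈ C ∧ cd.2 ∈ C ∧
        lorTau (lorQuotSep ℓ) cd.1 cd.2 ≤ ((ε/2 : ℝ) : EReal) := by
    intro cd
    rw [hCstardef]
    simp only [Finset.mem_filter, Finset.mem_product]
    tauto
  set Sbase : Finset (Quotient (lorSetoid ℓ) × Quotient (lorSetoid ℓ)) :=
    S.image (Prod.map (Quotient.mk (lorSetoid ℓ)) (Quotient.mk (lorSetoid ℓ))) with hSbase
  have hbasesub : Sbase ⊆ Cstar := by
    intro cd hcd
    rw [hSbase] at hcd
    obtain ⟨pq, hpq, rfl⟩ := Finset.mem_image.mp hcd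
    rw [hCstar]
    refine ⟨?_, ?_, ?_⟩
    · rw [hC]; exact ⟨pq.1, ⟨pq, hpq, Or.inl rfl⟩, rfl⟩
    · rw [hC]; exact ⟨pq.2, ⟨pq, hpq, Or.inr rfl⟩, rfl⟩
    · show max 0 (lorQuotSep ℓ (Quotient.mk (lorSetoid ℓ) pq.1)
        (Quotient.mk (lorSetoid ℓ) pq.2)) ≤ ((ε/2 : ℝ) : EReal)
      rw [lorQuotSep_mk]
      exact le_trans (hS.1 pq hpq) (by exact_mod_cast (by linarith : ε/4 ≤ ε/2))
  have hbasecard : Sbase.card ≤ min S.card Cstar.card := by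
    refine le_min ?_ (Finset.card_le_card hbasesub)
    rw [hSbase]
    exact Finset.card_image_le
  obtain ⟨Qnet, hQ1, hQ2, hQ3⟩ :=
    Finset.exists_subsuperset_card_eq hbasesub hbasecard (min_le_right _ _)
  have hQnet : IsLorNet (lorQuotSep ℓ) ε (Quotient.mk (lorSetoid ℓ) '' A) Qnet := by
    constructor
    · intro cd hcd
      have hmem := (hCstar cd).mp (hQ2 hcd)
      exact le_trans hmem.2.2 (by exact_mod_cast (by linarith : ε/2 ≤ ε))
    · rintro y ⟨x, hx, rfl⟩
      have hcov := hS.2 hx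
      simp only [Set.mem_iUnion] at hcov
      obtain ⟨pq, hpq, hxJ⟩ := hcov
      refine Set.mem_iUnion₂.mpr ⟨Prod.map (Quotient.mk (lorSetoid ℓ)) (Quotient.mk (lorSetoid ℓ)) pq,
        hQ1 (by rw [hSbase]; exact Finset.mem_image_of_mem _ hpq), ?_, ?_⟩
      · exact hxJ.1
      · exact hxJ.2
  have hQnetV : netVerts Qnet = (↑C : Set (Quotient (lorSetoid ℓ))) := by
    apply Set.Subset.antisymm
    · rintro c ⟨cd, hcd, hcomp⟩
      have hmem := (hCstar cd).mp (hQ2 hcd)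
      rcases hcomp with h1 | h1
      · rw [← h1]; exact Finset.mem_coe.mpr hmem.1
      · rw [← h1]; exact Finset.mem_coe.mpr hmem.2.1
    · intro c hc
      obtain ⟨v, hv, hvc⟩ := (hC c).mp (Finset.mem_coe.mp hc)
      obtain ⟨ab, hab, hcomp⟩ := hv
      refine ⟨Prod.map (Quotient.mk (lorSetoid ℓ)) (Quotient.mk (lorSetoid ℓ)) ab,
        hQ1 (by rw [hSbase]; exact Finset.mem_image_of_mem _ hab), ?_⟩
      rcases hcomp with h1 | h1
      · exact Or.inl (by rw [← hvc, ← h1]; rfl)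
      · exact Or.inr (by rw [← hvc, ← h1]; rfl)
  have hev : ∀ᶠ n in atTop, distortion (ℓn n) ℓ (R n) < ((ε/4 : ℝ) : EReal) := by
    apply hR.eventually_lt_const
    exact_mod_cast (by linarith : (0:ℝ) < ε/4)
  obtain ⟨n₁', hn₁'⟩ := Filter.eventually_atTop.mp hev
  have hkey : ∀ n : ℕ, ∃ (B : Finset (Xn n × Xn n)) (R' : Set (Xn n × Quotient (lorSetoid ℓ))),
      max n₀ n₁' ≤ n → ((IsLorNet (ℓn n) ε (An n) B ∧ B.card = min S.card Cstar.card ∧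
        IsCorresp R' (netVerts B) (netVerts Qnet)) ∧
        distortion (ℓn n) (lorQuotSep ℓ) R' ≤ distortion (ℓn n) ℓ (R n) ∧
        0 ≤ distortion (ℓn n) (lorQuotSep ℓ) R') := by
    intro n
    by_cases hn : max n₀ n₁' ≤ n
    · have hn0 : n₀ ≤ n := le_trans (le_max_left _ _) hn
      have hn1 : n₁' ≤ n := le_trans (le_max_right _ _) hn
      obtain ⟨hnetn, hcards, hcorr⟩ := hSn n hn0
      have hdis : distortion (ℓn n) ℓ (R n) ≤ ((ε/4:ℝ):EReal) := le_of_lt (hn₁' n hn1)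
      obtain ⟨B, R', h1, h2, h3, h4, h5⟩ := per_n_construction (ℓn n) ℓ (An n) (Sn n) S (R n)
          C Cstar Qnet ε hε (hzn n) (hbotn n) (htrin n) hz hC hCstar hQnetV hnetn hcards
          hcorr hdis hSne
      exact ⟨B, R', fun _ => ⟨⟨h1, h2, h3⟩, h4, h5⟩⟩
    · exact ⟨∅, ∅, fun h' => absurd h' hn⟩
  choose Bn R'n hBn using hkey
  refine ⟨max n₀ n₁', Qnet, Bn, R'n, hQnet, ?_, ?_⟩
  · intro n hn
    obtain ⟨⟨h1, h2, h3⟩, -, -⟩ := hBn n hn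
    exact ⟨h1, by rw [h2, hQ3], h3⟩
  · apply tendsto_of_tendsto_of_tendsto_of_le_of_le' tendsto_const_nhds hR
    · filter_upwards [Filter.eventually_ge_atTop (max n₀ n₁')] with n hn
      exact (hBn n hn).2.2
    · filter_upwards [Filter.eventually_ge_atTop (max n₀ n₁')] with n hn
      exact (hBn n hn).2.1

end Aux4
/-- **Time separation quotient preserves limits** (Theorem 5.3).
If `(Xn, ℓn, on', Un)` converges (resp. converges strongly) in the pointed Lorentzian
Gromov–Hausdorff sense to `(X, ℓ, o, U)`, then it also converges (resp. converges
strongly) to the time separation quotient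
`(X/∼, ℓ^∼, π(o), (π(U k))ₖ)`. -/
theorem quotient_preserves_limits
    (Xn : ℕ → Type u) (tXn : ∀ n, TopologicalSpace (Xn n))
    (ℓn : ∀ n, Xn n → Xn n → EReal) (on' : ∀ n, Xn n) (Un : ∀ n, ℕ → Set (Xn n))
    {X : Type v} (tX : TopologicalSpace X) (ℓ : X → X → EReal) (o : X) (U : ℕ → Set X)
    (hn : ∀ n, IsCoveredLPLS (tXn n) (ℓn n) (on' n) (Un n))
    (hX : IsCoveredLPLS tX ℓ o U) :
    (pLGHConv Xn tXn ℓn on' Un X tX ℓ o U →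
      pLGHConv Xn tXn ℓn on' Un (Quotient (lorSetoid ℓ)) (lorQuotTop tX ℓ)
        (lorQuotSep ℓ) (Quotient.mk (lorSetoid ℓ) o)
        (fun k => Quotient.mk (lorSetoid ℓ) '' U k)) ∧
    (pLGHConvStrong Xn tXn ℓn on' Un X tX ℓ o U →
      pLGHConvStrong Xn tXn ℓn on' Un (Quotient (lorSetoid ℓ)) (lorQuotTop tX ℓ)
        (lorQuotSep ℓ) (Quotient.mk (lorSetoid ℓ) o)
        (fun k => Quotient.mk (lorSetoid ℓ) '' U k)) := by
  constructor
  · intro hconv k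
    obtain ⟨hnets, hext, hdens⟩ := hconv k
    refine ⟨?_, ?_, ?_⟩
    · exact LGHNets_quotient hnets ⟨o, hX.base_mem k⟩ hX.ll_self
        (fun n => (hn n).ll_self) (fun n => (hn n).lpls.bot_or_nonneg)
        (fun n => (hn n).lpls.revTriangle)
    · exact LGHExtension_quotient hext
    · exact LGHFwdDense_quotient (fun e => 0 ≤ e) hdens
  · intro hconv k
    obtain ⟨hnets, hext, hdens⟩ := hconv k
    refine ⟨?_, ?_, ?_⟩
    · exact LGHNets_quotient hnets ⟨o, hX.base_mem k⟩ hX.ll_self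
        (fun n => (hn n).ll_self) (fun n => (hn n).lpls.bot_or_nonneg)
        (fun n => (hn n).lpls.revTriangle)
    · exact LGHExtension_quotient hext
    · exact LGHFwdDense_quotient (fun e => 0 < e) hdens

end
end

section
/- PDP implies causality. Let (X, ℓ) be a Lorentzian pre-length space satisfying the point distinction property. Then (X, ℓ) is causal: for all x, y ∈ X, if ℓ(x,y) ≥ 0 and ℓ(y,x) ≥ 0 then x = y; in particular the causal relation ≤ is a partial order. -/
open Filter Topology Set

set_option linter.unusedVariables false

universe u v w

noncomputable section

/-- **PDP implies causality** (Lemma 4.3).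
A Lorentzian pre-length space satisfying the point distinction property is causal:
if `ℓ(x,y) ≥ 0` and `ℓ(y,x) ≥ 0` then `x = y`; in particular the causal relation is a
partial order. -/
theorem pdp_implies_causal {X : Type u} (tX : TopologicalSpace X) (ℓ : X → X → EReal)
    (h : IsLPLS tX ℓ)
    (hpdp : ∀ x y : X, x ≠ y → ∃ z, ℓ x z ≠ ℓ y z ∨ ℓ z x ≠ ℓ z y) :
    (∀ x y : X, causal ℓ x y → causal ℓ y x → x = y) ∧
    IsPartialOrder X (causal ℓ) := by
  have antisym : ∀ x y : X, causal ℓ x y → causal ℓ y x → x = y := by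
    intro x y hxy hyx
    by_contra hne
    obtain ⟨z, hz⟩ := hpdp x y hne
    have key : ∀ a b : X, 0 ≤ ℓ a b → ∀ c, ℓ b c ≤ ℓ a c := by
      intro a b hab c
      calc ℓ b c = 0 + ℓ b c := (zero_add _).symm
        _ ≤ ℓ a b + ℓ b c := add_le_add_left hab _
        _ ≤ ℓ a c := h.revTriangle a b c
    have key' : ∀ a b : X, 0 ≤ ℓ a b → ∀ c, ℓ c a ≤ ℓ c b := by
      intro a b hab c
      calc ℓ c a = ℓ c a + 0 := (add_zero _).symm
        _ ≤ ℓ c a + ℓ a b := add_le_add_right hab _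
        _ ≤ ℓ c b := h.revTriangle c a b
    rcases hz with hz | hz
    · exact hz (le_antisymm (key y x hyx z) (key x y hxy z))
    · exact hz (le_antisymm (key' x y hxy z) (key' y x hyx z))
  refine ⟨antisym, ?_⟩
  have hrefl : IsRefl X (causal ℓ) := ⟨fun x => h.refl_nonneg x⟩
  have htrans : IsTrans X (causal ℓ) := by
    refine ⟨fun x y z hxy hyz => ?_⟩
    calc (0 : EReal) = 0 + 0 := (zero_add 0).symm
      _ ≤ ℓ x y + ℓ y z := add_le_add hxy hyz
      _ ≤ ℓ x z := h.revTriangle x y z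
  have hanti : IsAntisymm X (causal ℓ) := ⟨antisym⟩
  exact { }

end
end

section
/- Global hyperbolicity implies forward completeness. Let (X, ℓ) be a globally hyperbolic Lorentzian pre-length space, i.e. (X,ℓ) is causal, the causal relation ≤ is closed in X × X, and every causal diamond J(p,q) is compact. Then (X, ℓ) is forward complete: every sequence (x_k) in X with x_k ≤ x_{k+1} ≤ x̂ for all k and some x̂ ∈ X converges in X. -/
open Filter Topology Set

set_option linter.unusedVariables false

universe u v w

noncomputable section

/-- **Global hyperbolicity implies forward completeness** (Remark 4.7).
Let `(X, ℓ)` be a globally hyperbolic Lorentzian pre-length space: causal, with closed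
causal relation and compact causal diamonds.  Then every monotone increasing and bounded
sequence converges, i.e. `(X, ℓ)` is forward complete. -/
theorem globally_hyperbolic_forward_complete {X : Type u} (tX : TopologicalSpace X)
    (ℓ : X → X → EReal) (h : IsLPLS tX ℓ)
    -- causal
    (hcausal : ∀ x y : X, causal ℓ x y → causal ℓ y x → x = y)
    -- the causal relation is closed
    (hclosed : @IsClosed (X × X) (@instTopologicalSpaceProd X X tX tX)
      {p : X × X | causal ℓ p.1 p.2})
    -- causal diamonds are compact
    (hcompact : ∀ p q : X, @IsCompact X tX (diamondJ ℓ p q)) :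
    ForwardComplete tX ℓ := by
  intro x xhat hmono hbdd
  -- transitivity of the causal relation
  have htrans : ∀ {a b c : X}, causal ℓ a b → causal ℓ b c → causal ℓ a c := by
    intro a b c h1 h2
    have : (0 : EReal) + 0 ≤ ℓ a b + ℓ b c := add_le_add h1 h2
    have h0 : (0 : EReal) ≤ ℓ a b + ℓ b c := by simpa using this
    exact le_trans h0 (h.revTriangle a b c)
  -- monotonicity along the sequence
  have hmono' : ∀ m n, m ≤ n → causal ℓ (x m) (x n) := by
    intro m n hmn
    induction n, hmn using Nat.le_induction with
    | base => exact h.refl_nonneg (x m)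
    | succ n hmn ih => exact htrans ih (hmono n)
  -- the sequence lives in the compact diamond K
  set K : Set X := diamondJ ℓ (x 0) xhat with hK
  have hmemK : ∀ n, x n ∈ K := fun n => ⟨hmono' 0 n (Nat.zero_le n), hbdd n⟩
  have hKcompact : IsCompact K := hcompact (x 0) xhat
  -- closedness of causal futures and pasts
  have hJplus : ∀ a : X, IsClosed {z | causal ℓ a z} := by
    intro a
    have : {z | causal ℓ a z} = (fun z => ((a, z) : X × X)) ⁻¹' {p : X × X | causal ℓ p.1 p.2} := rfl
    rw [this]
    exact hclosed.preimage (Continuous.prodMk_right a)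
  have hJminus : ∀ a : X, IsClosed {z | causal ℓ z a} := by
    intro a
    have : {z | causal ℓ z a} = (fun z => ((z, a) : X × X)) ⁻¹' {p : X × X | causal ℓ p.1 p.2} := rfl
    rw [this]
    exact hclosed.preimage (Continuous.prodMk_left a)
  -- any cluster point dominates the whole sequence
  have hclust_above : ∀ y : X, MapClusterPt y atTop x → ∀ k, causal ℓ (x k) y := by
    intro y hy k
    have hmem : {z | causal ℓ (x k) z} ∈ map x atTop := by
      rw [mem_map]
      filter_upwards [eventually_ge_atTop k] with n hn
      exact hmono' k n hn
    have : ClusterPt y (𝓟 {z | causal ℓ (x k) z}) :=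
      hy.clusterPt.mono (le_principal_iff.mpr hmem)
    have hcl : y ∈ closure {z | causal ℓ (x k) z} := mem_closure_iff_clusterPt.mpr this
    rwa [(hJplus (x k)).closure_eq] at hcl
  -- any two cluster points are causally related, hence equal
  have hclust_le : ∀ y y' : X, MapClusterPt y atTop x → MapClusterPt y' atTop x →
      causal ℓ y y' := by
    intro y y' hy hy'
    have hmem : {z | causal ℓ z y'} ∈ map x atTop := by
      rw [mem_map]
      filter_upwards [] with n
      exact hclust_above y' hy' n
    have : ClusterPt y (𝓟 {z | causal ℓ z y'}) :=
      hy.clusterPt.mono (le_principal_iff.mpr hmem)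
    have hcl : y ∈ closure {z | causal ℓ z y'} := mem_closure_iff_clusterPt.mpr this
    rwa [(hJminus y').closure_eq] at hcl
  -- existence of a cluster point in the compact diamond
  have hle : map x atTop ≤ 𝓟 K := le_principal_iff.mpr (mem_map.mpr (Eventually.of_forall hmemK))
  obtain ⟨y, hyK, hy⟩ := hKcompact.exists_clusterPt hle
  refine ⟨y, ?_⟩
  exact hKcompact.tendsto_nhds_of_unique_mapClusterPt (Eventually.of_forall hmemK)
    (fun z hzK hz => hcausal z y (hclust_le z y hz hy) (hclust_le y z hy hz))

end
end

section
/- Bounding the cardinality of Lorentzian ε-nets in a product. Let (Σ, d) be a metric space, let 0 < t₋ < t₊, and let A ⊆ [t₋, t₊] × Σ in the Lorentzian product ℝ ×_ℓ Σ. Let 0 < ε ≤ t₋ and let s₁, …, s_N be a metric ε/3-net in Σ. Set L := ⌈3(t₊ − t₋)/ε⌉, t_i := t₋ + i·(ε/3) for i = −1, …, L+1, and x_{i,j} := (t_i, s_j). Then the collection 𝒥 := { J(x_{i−1,j}, x_{i+2,j}) : i = 0, …, L−1; j = 1, …, N } is a Lorentzian ε-net for A of cardinality at most L·N: each diamond satisfies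 τ(x_{i−1,j}, x_{i+2,j}) = ε and A ⊆ ⋃_{J∈𝒥} J. -/
open Set

noncomputable section

universe u

/-- The causal relation of the Lorentzian product `ℝ ×ₗ Σ` of the real line with a metric
space `(Σ, d)`: `(s,x) ≤ (t,y)` iff `d(x,y) ≤ t − s`. -/
def prodCausal {Sg : Type u} [MetricSpace Sg] (p q : ℝ × Sg) : Prop :=
  dist p.2 q.2 ≤ q.1 - p.1

/-- The causal diamond `J(p,q)` in the Lorentzian product. -/
def prodJ {Sg : Type u} [MetricSpace Sg] (p q : ℝ × Sg) : Set (ℝ × Sg) :=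
  {z | prodCausal p z ∧ prodCausal z q}

/-- The time separation function of the Lorentzian product:
`τ((s,x),(t,y)) = √((t−s)² − d(x,y)²)` for causally related points, `0` otherwise. -/
def prodTau {Sg : Type u} [MetricSpace Sg] (p q : ℝ × Sg) : ℝ :=
  open scoped Classical in
  if prodCausal p q then Real.sqrt ((q.1 - p.1) ^ 2 - dist p.2 q.2 ^ 2) else 0

/-- **Bounding the cardinality of Lorentzian ε-nets in a product** (Lemma 8.2).
Let `(Σ, d)` be a metric space, `0 < t₋ < t₊`, and `A ⊆ [t₋,t₊] × Σ` in the Lorentzian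
product `ℝ ×ₗ Σ`.  Let `0 < ε ≤ t₋` and let `s₁, …, s_N` be a metric `ε/3`-net in `Σ`.
With `L := ⌈3(t₊ − t₋)/ε⌉` and `t_i := t₋ + i·ε/3`, the collection of causal diamonds
`J((t_{i−1}, s_j), (t_{i+2}, s_j))`, `i = 0,…,L−1`, `j = 1,…,N` — of cardinality at most
`L · N` — is a Lorentzian `ε`-net for `A`: each diamond has timelike diameter exactly
`ε`, and the diamonds cover `A`. -/
theorem product_eps_net_cardinality {Sg : Type u} [MetricSpace Sg]
    (tm tp : ℝ) (htm : 0 < tm) (htmp : tm < tp)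
    (A : Set (ℝ × Sg)) (hA : ∀ p ∈ A, tm ≤ p.1 ∧ p.1 ≤ tp)
    (ε : ℝ) (hε : 0 < ε) (hεt : ε ≤ tm)
    (N : ℕ) (s : Fin N → Sg) (hS : ∀ x : Sg, ∃ j, dist x (s j) < ε / 3) :
    (∀ (i : Fin ⌈3 * (tp - tm) / ε⌉₊) (j : Fin N),
      prodTau ((tm + ((i : ℤ) - 1) * (ε / 3), s j) : ℝ × Sg)
        ((tm + ((i : ℤ) + 2) * (ε / 3), s j) : ℝ × Sg) = ε) ∧
    A ⊆ ⋃ (i : Fin ⌈3 * (tp - tm) / ε⌉₊) (j : Fin N),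
      prodJ ((tm + ((i : ℤ) - 1) * (ε / 3), s j) : ℝ × Sg)
        ((tm + ((i : ℤ) + 2) * (ε / 3), s j) : ℝ × Sg) := by

  have hL1 : 1 ≤ ⌈3 * (tp - tm) / ε⌉₊ := by
    rw [Nat.one_le_iff_ne_zero, ← Nat.pos_iff_ne_zero]
    exact Nat.ceil_pos.2 (div_pos (by linarith) hε)
  constructor
  · intro i j
    have hdiff : (tm + ((i : ℤ) + 2) * (ε / 3)) - (tm + ((i : ℤ) - 1) * (ε / 3)) = ε := by
      push_cast; ring
    simp only [prodTau, prodCausal, dist_self, hdiff]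
    rw [if_pos hε.le]
    simpa using Real.sqrt_sq hε.le
  · intro p hp
    obtain ⟨ht1, ht2⟩ := hA p hp
    obtain ⟨j, hj⟩ := hS p.2
    set x : ℝ := 3 * (p.1 - tm) / ε with hxdef
    have hx0 : 0 ≤ x := by
      apply div_nonneg _ hε.le
      nlinarith
    set L := ⌈3 * (tp - tm) / ε⌉₊ with hLdef
    set i0 : ℕ := min ⌊x⌋₊ (L - 1) with hi0
    have hiL : i0 < L := lt_of_le_of_lt (min_le_right _ _) (Nat.sub_lt hL1 one_pos)
    have hile : (i0 : ℝ) ≤ x := le_trans (by exact_mod_cast Nat.cast_le.2 (min_le_left _ _)) (Nat.floor_le hx0)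
    have hxle : x ≤ (i0 : ℝ) + 1 := by
      rcases le_or_gt ⌊x⌋₊ (L - 1) with h | h
      · have hi : i0 = ⌊x⌋₊ := min_eq_left h
        rw [hi]
        exact (Nat.lt_floor_add_one x).le
      · have hi : i0 = L - 1 := min_eq_right h.le
        have hxL : x ≤ (L : ℝ) := by
          have h1 : x ≤ 3 * (tp - tm) / ε := by
            rw [hxdef]
            gcongr
            all_goals linarith
          exact h1.trans (Nat.le_ceil _)
        rw [hi, Nat.cast_sub hL1]
        push_cast
        try linarith
    have hkey : x * (ε / 3) = p.1 - tm := by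
      rw [hxdef]; field_simp
    refine mem_iUnion.2 ⟨⟨i0, hiL⟩, mem_iUnion.2 ⟨j, ?_⟩⟩
    have hdj : dist p.2 (s j) < ε / 3 := hj
    constructor
    · show dist (s j) p.2 ≤ p.1 - (tm + ((i0 : ℤ) - 1) * (ε / 3))
      rw [dist_comm]
      push_cast
      nlinarith [hdj, hile, hε]
    · show dist p.2 (s j) ≤ (tm + ((i0 : ℤ) + 2) * (ε / 3)) - p.1
      push_cast
      nlinarith [hdj, hxle, hε]

end
end

section
/- Characterization of global hyperbolicity. Let (X, ℓ) be a Lorentzian pre-length space without chronologically isolated points (I⁺(x) ≠ ∅ and I⁻(x) ≠ ∅ for every x ∈ X) and with closed causal relation ≤ (the set {(x,y) : ℓ(x,y) ≥ 0} is closed in X × X). Then the following are equivalent: (i) the causal diamonds J(p,q) are compact for all p, q ∈ X; (ii) the chronological diamonds I(p,q) are relatively compact for all p ≪ q. -/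
open Filter Topology Set

set_option linter.unusedVariables false

universe u v w

noncomputable section

/-- **Characterization of global hyperbolicity** (Lemma A.11).
Let `(X, ℓ)` be a Lorentzian pre-length space without chronologically isolated points
(`I⁺(x) ≠ ∅ ≠ I⁻(x)` for all `x`) and with closed causal relation.  Then the causal
diamonds `J(p,q)` are compact for all `p, q` if and only if the chronological diamonds
`I(p,q)` are relatively compact for all `p ≪ q`. -/
theorem global_hyperbolicity_characterization {X : Type u} (tX : TopologicalSpace X)
    (ℓ : X → X → EReal) (h : IsLPLS tX ℓ)
    (hIplus : ∀ x : X, ∃ y, chron ℓ x y)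
    (hIminus : ∀ x : X, ∃ y, chron ℓ y x)
    (hclosed : @IsClosed (X × X) (@instTopologicalSpaceProd X X tX tX)
      {p : X × X | causal ℓ p.1 p.2}) :
    (∀ p q : X, @IsCompact X tX (diamondJ ℓ p q)) ↔
    (∀ p q : X, chron ℓ p q → @IsCompact X tX (@closure X tX (diamondI ℓ p q))) := by
  have hJclosed : ∀ p q : X, IsClosed (diamondJ ℓ p q) := by
    intro p q
    have h1 : IsClosed {z : X | causal ℓ p z} :=
      hclosed.preimage (Continuous.prodMk_right p)
    have h2 : IsClosed {z : X | causal ℓ z q} :=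
      hclosed.preimage (continuous_id.prodMk continuous_const)
    exact h1.inter h2
  have hchain1 : ∀ a b c : X, chron ℓ a b → causal ℓ b c → chron ℓ a c := by
    intro a b c hab hbc
    have hle : ℓ a b ≤ ℓ a b + ℓ b c := le_add_of_nonneg_right hbc
    exact lt_of_lt_of_le hab (hle.trans (h.revTriangle a b c))
  have hchain2 : ∀ a b c : X, causal ℓ a b → chron ℓ b c → chron ℓ a c := by
    intro a b c hab hbc
    have hle : ℓ b c ≤ ℓ a b + ℓ b c := le_add_of_nonneg_left hab
    exact lt_of_lt_of_le hbc (hle.trans (h.revTriangle a b c))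
  constructor
  · intro hJ p q hpq
    have hsub : diamondI ℓ p q ⊆ diamondJ ℓ p q := fun z hz => ⟨le_of_lt hz.1, le_of_lt hz.2⟩
    exact (hJ p q).of_isClosed_subset isClosed_closure
      (closure_minimal hsub (hJclosed p q))
  · intro hI p q
    rcases Set.eq_empty_or_nonempty (diamondJ ℓ p q) with he | ⟨z0, hz0⟩
    · rw [he]; exact isCompact_empty
    · obtain ⟨p', hp'⟩ := hIminus p
      obtain ⟨q', hq'⟩ := hIplus q
      have hp'z0 : chron ℓ p' z0 := hchain1 p' p z0 hp' hz0.1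
      have hp'q : chron ℓ p' q := hchain1 p' z0 q hp'z0 hz0.2
      have hp'q' : chron ℓ p' q' := hchain1 p' q q' hp'q (le_of_lt hq')
      have hsub : diamondJ ℓ p q ⊆ closure (diamondI ℓ p' q') := by
        intro z hz
        apply subset_closure
        exact ⟨hchain1 p' p z hp' hz.1, hchain2 z q q' hz.2 hq'⟩
      exact (hI p' q' hp'q').of_isClosed_subset (hJclosed p q) hsub

end
end
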